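/- arXiv:1703.10709 — 4 statements merged into one kernel-verified Lean document; each statement's English description precedes it below -/
import Mathlib

section
/- Let A > 0, a > 0, T > 0. Let u be continuous on [−a,a] × [0,T), with u_x, u_xx, u_t continuous on (−a,a) × (0,T), solving the graph flow equation u_t = u_xx/(1 + u_x²) + A√(1 + u_x²) on (−a,a) × (0,T), with u(−a,t) = u(a,t) = 0 for all t ∈ [0,T) and u(x,0) ≥ 0 for all x ∈ [−a,a]. Then u(x,t) > 0 for every x ∈ (−a,a) and t ∈ (0,T). (The point is that the constant function 0 is a strict subsolution, since A√(1+0) = A > 0.) -/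
open Set Topology Filter

/-- If `g` has derivative `g'` at `b` and `g b` is minimal among values on `[c, b)`,
then `g' ≤ 0`. -/
lemma deriv_nonpos_of_left_min {g : ℝ → ℝ} {g' b c : ℝ} (hd : HasDerivAt g g' b)
    (hcb : c < b) (hmin : ∀ t ∈ Ico c b, g b ≤ g t) : g' ≤ 0 := by
  have h := (hd.hasDerivWithinAt (s := Iio b))
  rw [hasDerivWithinAt_iff_tendsto_slope' (notMem_Iio.2 le_rfl)] at h
  refine le_of_tendsto h ?_
  filter_upwards [self_mem_nhdsWithin,
    eventually_nhdsWithin_of_eventually_nhds (eventually_gt_nhds hcb)] with t ht hct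
  rw [slope_def_field]
  have h1 : 0 ≤ g t - g b := sub_nonneg.2 (hmin t ⟨le_of_lt hct, ht⟩)
  have h2 : t - b ≤ 0 := sub_nonpos.2 (le_of_lt ht)
  exact div_nonpos_iff.2 (Or.inl ⟨h1, h2⟩)

/-- Second derivative test at an interior minimum: if `f` has derivative `f1` on `(p,q)`,
`f1` has derivative `f2` at `x`, `f1 x = 0`, and `x` is a minimum point of `f` on `(p,q)`,
then `0 ≤ f2`. -/
lemma second_deriv_nonneg_at_min {f f1 : ℝ → ℝ} {f2 p q x : ℝ} (hpx : p < x) (hxq : x < q)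
    (hd1 : ∀ y ∈ Ioo p q, HasDerivAt f (f1 y) y) (hd2 : HasDerivAt f1 f2 x)
    (hf1 : f1 x = 0) (hmin : ∀ y ∈ Ioo p q, f x ≤ f y) : 0 ≤ f2 := by
  by_contra hcon
  push_neg at hcon
  -- slopes of f1 from the left converge to f2 < 0, hence f1 > 0 on a left interval
  have h := (hd2.hasDerivWithinAt (s := Iio x))
  rw [hasDerivWithinAt_iff_tendsto_slope' (notMem_Iio.2 le_rfl)] at h
  have hev : ∀ᶠ y in 𝓝[<] x, 0 < f1 y := by
    filter_upwards [h (Iio_mem_nhds hcon), self_mem_nhdsWithin] with y hy hyx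
    simp only [mem_preimage, mem_Iio] at hy
    simp only [mem_Iio] at hyx
    rw [slope_def_field, hf1, sub_zero] at hy
    by_contra hf
    push_neg at hf
    exact absurd hy (not_lt.2 (div_nonneg_iff.2 (Or.inr ⟨hf, sub_nonpos.2 hyx.le⟩)))
  obtain ⟨l, hl, hsub⟩ := mem_nhdsLT_iff_exists_Ioo_subset.1 hev
  set m : ℝ := max l p with hm
  have hmx : m < x := max_lt hl hpx
  set z : ℝ := (m + x) / 2 with hz
  have hmz : m < z := by simp only [hz]; linarith
  have hzx : z < x := by simp only [hz]; linarith
  have hIcc : Icc z x ⊆ Ioo p q := fun y hy =>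
    ⟨lt_of_le_of_lt (le_max_right l p) (lt_of_lt_of_le hmz hy.1), lt_of_le_of_lt hy.2 hxq⟩
  have hmono : StrictMonoOn f (Icc z x) := by
    refine strictMonoOn_of_deriv_pos (convex_Icc z x)
      (fun y hy => ((hd1 y (hIcc hy)).differentiableAt).continuousAt.continuousWithinAt) ?_
    intro y hy
    rw [interior_Icc] at hy
    rw [(hd1 y (hIcc ⟨hy.1.le, hy.2.le⟩)).deriv]
    exact hsub ⟨lt_of_le_of_lt (le_max_left l p) (lt_of_lt_of_le hmz hy.1.le), hy.2⟩
  have : f z < f x := hmono ⟨le_rfl, hzx.le⟩ ⟨hzx.le, le_rfl⟩ hzx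
  exact absurd (hmin z (hIcc ⟨le_rfl, hzx.le⟩)) (not_le.2 this)

/-- Strict positivity: if `u` solves the graph flow
`u_t = u_xx/(1+u_x²) + A√(1+u_x²)` on `(-a,a)×(0,T)` with zero boundary values and a
nonnegative initial condition, then `u > 0` in the interior (the zero function is a
strict subsolution since `A > 0`). -/
theorem strict_positivity (A a T : ℝ) (hA : 0 < A) (ha : 0 < a) (hT : 0 < T)
    (u ux uxx ut : ℝ → ℝ → ℝ)
    (hu_cont : ContinuousOn (fun p : ℝ × ℝ => u p.1 p.2) (Icc (-a) a ×ˢ Ico 0 T))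
    (hux : ∀ x ∈ Ioo (-a) a, ∀ t ∈ Ioo (0 : ℝ) T,
      HasDerivAt (fun y => u y t) (ux x t) x)
    (huxx : ∀ x ∈ Ioo (-a) a, ∀ t ∈ Ioo (0 : ℝ) T,
      HasDerivAt (fun y => ux y t) (uxx x t) x)
    (hut : ∀ x ∈ Ioo (-a) a, ∀ t ∈ Ioo (0 : ℝ) T,
      HasDerivAt (fun τ => u x τ) (ut x t) t)
    (hux_cont : ContinuousOn (fun p : ℝ × ℝ => ux p.1 p.2) (Ioo (-a) a ×ˢ Ioo 0 T))
    (huxx_cont : ContinuousOn (fun p : ℝ × ℝ => uxx p.1 p.2) (Ioo (-a) a ×ˢ Ioo 0 T))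
    (hut_cont : ContinuousOn (fun p : ℝ × ℝ => ut p.1 p.2) (Ioo (-a) a ×ˢ Ioo 0 T))
    (hpde : ∀ x ∈ Ioo (-a) a, ∀ t ∈ Ioo (0 : ℝ) T,
      ut x t = uxx x t / (1 + (ux x t) ^ 2) + A * Real.sqrt (1 + (ux x t) ^ 2))
    (hbc : ∀ t ∈ Ico (0 : ℝ) T, u (-a) t = 0 ∧ u a t = 0)
    (hic : ∀ x ∈ Icc (-a) a, 0 ≤ u x 0) :
    ∀ x ∈ Ioo (-a) a, ∀ t ∈ Ioo (0 : ℝ) T, 0 < u x t := by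
  intro x₀ hx₀ t₀ ht₀
  set R : Set (ℝ × ℝ) := Icc (-a) a ×ˢ Icc 0 t₀ with hR
  have hRsub : R ⊆ Icc (-a) a ×ˢ Ico 0 T := fun p hp =>
    ⟨hp.1, hp.2.1, lt_of_le_of_lt hp.2.2 ht₀.2⟩
  -- key: no interior minimum point with t > 0
  have key : ∀ xb ∈ Ioo (-a) a, ∀ tb, 0 < tb → tb ≤ t₀ →
      (∀ p ∈ R, u xb tb ≤ u p.1 p.2) → False := by
    intro xb hxb tb htb0 htbt₀ hmin
    have htb : tb ∈ Ioo (0 : ℝ) T := ⟨htb0, lt_of_le_of_lt htbt₀ ht₀.2⟩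
    have htbIcc : tb ∈ Icc (0 : ℝ) t₀ := ⟨htb0.le, htbt₀⟩
    -- minimum in x on the slice t = tb
    have hminx : ∀ y ∈ Ioo (-a) a, u xb tb ≤ u y tb := fun y hy =>
      hmin (y, tb) ⟨⟨hy.1.le, hy.2.le⟩, htbIcc⟩
    have hlocmin : IsLocalMin (fun y => u y tb) xb :=
      Filter.eventually_iff_exists_mem.2 ⟨Ioo (-a) a, Ioo_mem_nhds hxb.1 hxb.2,
        fun y hy => hminx y hy⟩
    have hux0 : ux xb tb = 0 := hlocmin.hasDerivAt_eq_zero (hux xb hxb tb htb)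
    have huxx0 : 0 ≤ uxx xb tb :=
      second_deriv_nonneg_at_min hxb.1 hxb.2
        (fun y hy => hux y hy tb htb) (huxx xb hxb tb htb) hux0 hminx
    have hut0 : ut xb tb ≤ 0 := by
      refine deriv_nonpos_of_left_min (hut xb hxb tb htb) htb0 ?_
      intro t ht
      exact hmin (xb, t) ⟨⟨hxb.1.le, hxb.2.le⟩, ht.1, le_trans ht.2.le htbt₀⟩
    have hpde' := hpde xb hxb tb htb
    rw [hux0] at hpde'
    simp only [ne_eq, OfNat.ofNat_ne_zero, not_false_eq_true, zero_pow, add_zero, div_one,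
      Real.sqrt_one, mul_one] at hpde'
    linarith
  -- compactness: minimum over R
  have hRcomp : IsCompact R := (isCompact_Icc).prod isCompact_Icc
  have hRne : R.Nonempty := ⟨(x₀, t₀), ⟨hx₀.1.le, hx₀.2.le⟩, ht₀.1.le, le_rfl⟩
  obtain ⟨⟨xm, tm⟩, hmem, hminOn⟩ :=
    hRcomp.exists_isMinOn hRne (hu_cont.mono hRsub)
  have hmin : ∀ p ∈ R, u xm tm ≤ u p.1 p.2 := fun p hp => hminOn hp
  by_contra hcon
  push_neg at hcon
  obtain ⟨⟨hxm1, hxm2⟩, htm1, htm2⟩ := hmem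
  dsimp only at hxm1 hxm2 htm1 htm2
  by_cases hint : -a < xm ∧ xm < a ∧ 0 < tm
  · exact key xm ⟨hint.1, hint.2.1⟩ tm hint.2.2 htm2 hmin
  · -- minimum attained on parabolic boundary, so min ≥ 0
    have hm0 : 0 ≤ u xm tm := by
      by_cases htm : tm = 0
      · subst htm; exact hic xm ⟨hxm1, hxm2⟩
      · have htm' : 0 < tm := lt_of_le_of_ne htm1 (Ne.symm htm)
        have htmT : tm ∈ Ico (0 : ℝ) T := ⟨htm1, lt_of_le_of_lt htm2 ht₀.2⟩
        rcases eq_or_lt_of_le hxm1 with h1 | h1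
        · rw [← h1]; exact le_of_eq ((hbc tm htmT).1).symm
        · rcases eq_or_lt_of_le hxm2 with h2 | h2
          · rw [h2]; exact le_of_eq ((hbc tm htmT).2).symm
          · exact absurd ⟨h1, h2, htm'⟩ hint
    -- then u x₀ t₀ = 0 and (x₀,t₀) is itself a minimum point
    have hle : u xm tm ≤ u x₀ t₀ := hmin (x₀, t₀) ⟨⟨hx₀.1.le, hx₀.2.le⟩, ht₀.1.le, le_rfl⟩
    have h0 : u x₀ t₀ = 0 := le_antisymm hcon (le_trans hm0 hle)
    refine key x₀ hx₀ t₀ ht₀.1 le_rfl ?_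
    intro p hp
    rw [h0]
    exact le_trans hm0 (hmin p hp)
end

section
/- Let A > 0, a > 0, T > 0, and let u : [−a,a] × (0,T) → ℝ have u, u_x, u_t, u_xx, u_xt continuous on [−a,a] × (0,T), satisfy u(−a,t) = u(a,t) = 0 for all t ∈ (0,T), and solve the graph flow equation u_t = u_xx/(1 + u_x²) + A√(1 + u_x²) on (−a,a) × (0,T). Define J(t) = ∫_{−a}^{a} √(1 + u_x(x,t)²) dx and I(t) = ∫_{−a}^{a} u(x,t) dx. Then J and I are differentiable on (0,T) and J′(t) = −∫_{−a}^{a} u_t(x,t)² / √(1 + u_x(x,t)²) dx + A·I′(t) for every t ∈ (0,T). -/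
open Set intervalIntegral MeasureTheory Metric

lemma sq1_pos (s : ℝ) : (0:ℝ) < 1 + s^2 := by positivity

lemma sqrt1_pos (s : ℝ) : 0 < Real.sqrt (1 + s^2) := Real.sqrt_pos.mpr (sq1_pos s)

lemma sqrt1_sq (s : ℝ) : Real.sqrt (1 + s^2) ^ 2 = 1 + s^2 :=
  Real.sq_sqrt (sq1_pos s).le

lemma aux_sqrt_deriv (s : ℝ) :
    HasDerivAt (fun y : ℝ => Real.sqrt (1 + y^2)) (s / Real.sqrt (1 + s^2)) s := by
  have h1 : HasDerivAt (fun y : ℝ => 1 + y^2) (2*s) s := by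
    simpa using ((hasDerivAt_pow 2 s).const_add 1)
  have h2 := (Real.hasDerivAt_sqrt (sq1_pos s).ne').comp s h1
  refine h2.congr_deriv ?_
  field_simp

lemma aux_phi_deriv (s : ℝ) :
    HasDerivAt (fun y : ℝ => y / Real.sqrt (1 + y^2))
      (1 / ((1 + s^2) * Real.sqrt (1 + s^2))) s := by
  have h := (hasDerivAt_id s).div (aux_sqrt_deriv s) (sqrt1_pos s).ne'
  refine h.congr_deriv ?_
  symm
  rw [div_eq_div_iff (by positivity) (by positivity)]
  have hs := sqrt1_sq s
  field_simp
  simp only [id]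
  rw [hs]
  ring

lemma aux_param_deriv (xa xb t₁ t₂ t₀ : ℝ) (hxab : xa ≤ xb)
    (ht₁ : t₁ < t₀) (ht₂ : t₀ < t₂) (F F' : ℝ → ℝ → ℝ)
    (hFc : ∀ t ∈ Ioo t₁ t₂, ContinuousOn (fun x => F x t) (Icc xa xb))
    (hF'c : ContinuousOn (fun p : ℝ × ℝ => F' p.1 p.2) (Icc xa xb ×ˢ Icc t₁ t₂))
    (hdiff : ∀ x ∈ Icc xa xb, ∀ t ∈ Ioo t₁ t₂, HasDerivAt (fun τ => F x τ) (F' x t) t) :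
    HasDerivAt (fun τ => ∫ x in xa..xb, F x τ) (∫ x in xa..xb, F' x t₀) t₀ := by
  set ε := min (t₀ - t₁) (t₂ - t₀) with hε
  have hεpos : 0 < ε := lt_min (by linarith) (by linarith)
  have hball : ball t₀ ε ⊆ Ioo t₁ t₂ := by
    intro t ht
    rw [Real.ball_eq_Ioo] at ht
    constructor
    · have : t₀ - ε ≥ t₁ := by have := min_le_left (t₀ - t₁) (t₂ - t₀); linarith [this]
      linarith [ht.1]
    · have : t₀ + ε ≤ t₂ := by have := min_le_right (t₀ - t₁) (t₂ - t₀); linarith [this]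
      linarith [ht.2]
  have ht₀m : t₀ ∈ Ioo t₁ t₂ := ⟨ht₁, ht₂⟩
  have hK : IsCompact (Icc xa xb ×ˢ Icc t₁ t₂) := (isCompact_Icc).prod isCompact_Icc
  obtain ⟨C, hC⟩ := hK.exists_bound_of_continuousOn hF'c
  have hIsub : Set.uIoc xa xb ⊆ Icc xa xb := by
    rw [uIoc_of_le hxab]; exact Ioc_subset_Icc_self
  have key := hasDerivAt_integral_of_dominated_loc_of_deriv_le (F := fun t x => F x t)
    (F' := fun t x => F' x t) (x₀ := t₀) (a := xa) (b := xb) (μ := volume)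
    (bound := fun _ => C) (ball_mem_nhds t₀ hεpos)
    (Filter.eventually_of_mem (Ioo_mem_nhds ht₁ ht₂) (fun t ht =>
      ((hFc t ht).mono hIsub).aestronglyMeasurable measurableSet_uIoc))
    (((hFc t₀ ht₀m)).intervalIntegrable_of_Icc hxab)
    (by
      apply ContinuousOn.aestronglyMeasurable _ measurableSet_uIoc
      intro x hx
      exact (hF'c.comp ((continuous_id.prodMk continuous_const).continuousOn)
        (fun y hy => ⟨hIsub hy, le_of_lt ht₁, le_of_lt ht₂⟩)) x hx)
    (Filter.Eventually.of_forall (fun x hx t ht => by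
      have := hC (x, t) ⟨hIsub hx, Ioo_subset_Icc_self (hball ht)⟩
      simpa using this))
    (intervalIntegrable_const)
    (Filter.Eventually.of_forall (fun x hx t ht => hdiff x (hIsub hx) t (hball ht)))
  exact key.2


/-- (Step 4 of Proposition 4.2.) For a graph-flow solution with fixed
endpoints, the length `J(t) = ∫√(1+u_x²)dx` and the area `I(t) = ∫u dx` are
differentiable and satisfy the Lyapunov identity
`J'(t) = -∫ u_t²/√(1+u_x²) dx + A·I'(t)`. -/
theorem lyapunov_identity_graph (A a T : ℝ) (hA : 0 < A) (ha : 0 < a) (hT : 0 < T)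
    (u ux ut uxx uxt : ℝ → ℝ → ℝ)
    (hu_cont : ContinuousOn (fun p : ℝ × ℝ => u p.1 p.2) (Icc (-a) a ×ˢ Ioo 0 T))
    (hux : ∀ x ∈ Icc (-a) a, ∀ t ∈ Ioo (0 : ℝ) T,
      HasDerivWithinAt (fun y => u y t) (ux x t) (Icc (-a) a) x)
    (huxx : ∀ x ∈ Icc (-a) a, ∀ t ∈ Ioo (0 : ℝ) T,
      HasDerivWithinAt (fun y => ux y t) (uxx x t) (Icc (-a) a) x)
    (hut : ∀ x ∈ Icc (-a) a, ∀ t ∈ Ioo (0 : ℝ) T,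
      HasDerivAt (fun τ => u x τ) (ut x t) t)
    (huxt : ∀ x ∈ Icc (-a) a, ∀ t ∈ Ioo (0 : ℝ) T,
      HasDerivAt (fun τ => ux x τ) (uxt x t) t)
    (hux_cont : ContinuousOn (fun p : ℝ × ℝ => ux p.1 p.2) (Icc (-a) a ×ˢ Ioo 0 T))
    (hut_cont : ContinuousOn (fun p : ℝ × ℝ => ut p.1 p.2) (Icc (-a) a ×ˢ Ioo 0 T))
    (huxx_cont : ContinuousOn (fun p : ℝ × ℝ => uxx p.1 p.2) (Icc (-a) a ×ˢ Ioo 0 T))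
    (huxt_cont : ContinuousOn (fun p : ℝ × ℝ => uxt p.1 p.2) (Icc (-a) a ×ˢ Ioo 0 T))
    (hbc : ∀ t ∈ Ioo (0 : ℝ) T, u (-a) t = 0 ∧ u a t = 0)
    (hpde : ∀ x ∈ Ioo (-a) a, ∀ t ∈ Ioo (0 : ℝ) T,
      ut x t = uxx x t / (1 + (ux x t) ^ 2) + A * Real.sqrt (1 + (ux x t) ^ 2)) :
    ∃ J' I' : ℝ → ℝ, ∀ t ∈ Ioo (0 : ℝ) T,
      HasDerivAt (fun τ => ∫ x in (-a)..a, Real.sqrt (1 + (ux x τ) ^ 2)) (J' t) t ∧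
      HasDerivAt (fun τ => ∫ x in (-a)..a, u x τ) (I' t) t ∧
      J' t = -(∫ x in (-a)..a, (ut x t) ^ 2 / Real.sqrt (1 + (ux x t) ^ 2))
              + A * I' t := by
  have haa : (-a : ℝ) ≤ a := by linarith
  refine ⟨fun t => ∫ x in (-a)..a, uxt x t * (ux x t / Real.sqrt (1 + (ux x t)^2)),
          fun t => ∫ x in (-a)..a, ut x t, ?_⟩
  intro t₀ ht₀
  obtain ⟨ht₀0, ht₀T⟩ := ht₀
  have ht₀' : t₀ ∈ Ioo (0:ℝ) T := ⟨ht₀0, ht₀T⟩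
  set t₁ := t₀/2 with ht₁def
  set t₂ := (t₀ + T)/2 with ht₂def
  have h1 : 0 < t₁ := by simp [ht₁def]; linarith
  have h2 : t₁ < t₀ := by simp [ht₁def]; linarith
  have h3 : t₀ < t₂ := by simp [ht₂def]; linarith
  have h4 : t₂ < T := by simp [ht₂def]; linarith
  have hIooSub : Ioo t₁ t₂ ⊆ Ioo (0:ℝ) T :=
    fun s hs => ⟨h1.trans hs.1, hs.2.trans h4⟩
  have hIccSub : Icc t₁ t₂ ⊆ Ioo (0:ℝ) T :=
    fun s hs => ⟨h1.trans_le hs.1, hs.2.trans_lt h4⟩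
  have hprodSub : Icc (-a) a ×ˢ Icc t₁ t₂ ⊆ Icc (-a) a ×ˢ Ioo (0:ℝ) T :=
    prod_mono (subset_refl _) hIccSub
  -- continuity of t-slices
  have slice : ∀ (f : ℝ → ℝ → ℝ),
      ContinuousOn (fun p : ℝ × ℝ => f p.1 p.2) (Icc (-a) a ×ˢ Ioo 0 T) →
      ∀ t ∈ Ioo (0:ℝ) T, ContinuousOn (fun x => f x t) (Icc (-a) a) := by
    intro f hf t ht
    exact hf.comp ((continuous_id.prodMk continuous_const).continuousOn)
      (fun x hx => ⟨hx, ht⟩)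
  have cux := slice ux hux_cont t₀ ht₀'
  have cut := slice ut hut_cont t₀ ht₀'
  have cuxx := slice uxx huxx_cont t₀ ht₀'
  have cuxt := slice uxt huxt_cont t₀ ht₀'
  have csqrt : ContinuousOn (fun x => Real.sqrt (1 + (ux x t₀)^2)) (Icc (-a) a) :=
    Real.continuous_sqrt.comp_continuousOn (continuousOn_const.add (cux.pow 2))
  have hsne : ∀ x ∈ Icc (-a) a, Real.sqrt (1 + (ux x t₀)^2) ≠ 0 :=
    fun x _ => (sqrt1_pos _).ne'
  -- I derivative
  have hI : HasDerivAt (fun τ => ∫ x in (-a)..a, u x τ) (∫ x in (-a)..a, ut x t₀) t₀ := by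
    apply aux_param_deriv (-a) a t₁ t₂ t₀ haa h2 h3 u ut
    · exact fun t ht => slice u hu_cont t (hIooSub ht)
    · exact hut_cont.mono hprodSub
    · exact fun x hx t ht => hut x hx t (hIooSub ht)
  -- J derivative
  have hJ : HasDerivAt (fun τ => ∫ x in (-a)..a, Real.sqrt (1 + (ux x τ)^2))
      (∫ x in (-a)..a, uxt x t₀ * (ux x t₀ / Real.sqrt (1 + (ux x t₀)^2))) t₀ := by
    apply aux_param_deriv (-a) a t₁ t₂ t₀ haa h2 h3
      (fun x t => Real.sqrt (1 + (ux x t)^2))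
      (fun x t => uxt x t * (ux x t / Real.sqrt (1 + (ux x t)^2)))
    · intro t ht
      exact Real.continuous_sqrt.comp_continuousOn
        (continuousOn_const.add ((slice ux hux_cont t (hIooSub ht)).pow 2))
    · have cux2 := hux_cont.mono hprodSub
      have cuxt2 := huxt_cont.mono hprodSub
      exact cuxt2.mul (cux2.div
        (Real.continuous_sqrt.comp_continuousOn (continuousOn_const.add (cux2.pow 2)))
        (fun p _ => (sqrt1_pos _).ne'))
    · intro x hx t ht
      have h := (aux_sqrt_deriv (ux x t)).comp t (huxt x hx t (hIooSub ht))
      refine h.congr_deriv ?_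
      ring
  -- endpoint time-derivatives vanish
  have hma : -a ∈ Icc (-a) a := left_mem_Icc.mpr haa
  have hpa : a ∈ Icc (-a) a := right_mem_Icc.mpr haa
  have hut0 : ut (-a) t₀ = 0 ∧ ut a t₀ = 0 := by
    constructor
    · refine (hut (-a) hma t₀ ht₀').unique ?_
      refine (hasDerivAt_const t₀ (0:ℝ)).congr_of_eventuallyEq ?_
      exact Filter.eventually_of_mem (isOpen_Ioo.mem_nhds ht₀')
        (fun τ hτ => (hbc τ hτ).1)
    · refine (hut a hpa t₀ ht₀').unique ?_
      refine (hasDerivAt_const t₀ (0:ℝ)).congr_of_eventuallyEq ?_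
      exact Filter.eventually_of_mem (isOpen_Ioo.mem_nhds ht₀')
        (fun τ hτ => (hbc τ hτ).2)
  -- Schwarz representation: ut x t₀ = ∫_{-a}^x uxt
  have hrep : ∀ x ∈ Icc (-a) a, ut x t₀ = ∫ y in (-a)..x, uxt y t₀ := by
    intro x hx
    have hsub : Icc (-a) x ⊆ Icc (-a) a := Icc_subset_Icc le_rfl hx.2
    have hrepu : ∀ τ ∈ Ioo (0:ℝ) T, u x τ = ∫ y in (-a)..x, ux y τ := by
      intro τ hτ
      have hder : ∀ y ∈ Ioo (-a) x, HasDerivWithinAt (fun y => u y τ) (ux y τ) (Ioi y) y := by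
        intro y hy
        have hyIcc : y ∈ Icc (-a) a := ⟨hy.1.le, hy.2.le.trans hx.2⟩
        exact ((hux y hyIcc τ hτ).hasDerivAt
          (Icc_mem_nhds hy.1 (hy.2.trans_le hx.2))).hasDerivWithinAt
      have := integral_eq_sub_of_hasDeriv_right_of_le hx.1
        ((slice u hu_cont τ hτ).mono hsub) hder
        (((slice ux hux_cont τ hτ).mono hsub).intervalIntegrable_of_Icc hx.1)
      rw [this, (hbc τ hτ).1, sub_zero]
    have hd2 : HasDerivAt (fun τ => ∫ y in (-a)..x, ux y τ) (∫ y in (-a)..x, uxt y t₀) t₀ := by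
      apply aux_param_deriv (-a) x t₁ t₂ t₀ hx.1 h2 h3 ux uxt
      · exact fun t ht => (slice ux hux_cont t (hIooSub ht)).mono hsub
      · exact huxt_cont.mono ((prod_mono hsub hIccSub))
      · exact fun y hy t ht => huxt y (hsub hy) t (hIooSub ht)
    have hd3 : HasDerivAt (fun τ => u x τ) (∫ y in (-a)..x, uxt y t₀) t₀ :=
      hd2.congr_of_eventuallyEq (Filter.eventually_of_mem (isOpen_Ioo.mem_nhds ht₀')
        (fun τ hτ => hrepu τ hτ))
    exact (hut x hx t₀ ht₀').unique hd3
  -- x-derivative of ut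
  have hutx : ∀ x ∈ Ioo (-a) a, HasDerivAt (fun y => ut y t₀) (uxt x t₀) x := by
    intro x hx
    have hFTC : HasDerivAt (fun y' => ∫ y in (-a)..y', uxt y t₀) (uxt x t₀) x :=
      integral_hasDerivAt_right
        ((cuxt.mono (Icc_subset_Icc le_rfl hx.2.le)).intervalIntegrable_of_Icc hx.1.le)
        (ContinuousOn.stronglyMeasurableAtFilter isOpen_Ioo
          (cuxt.mono Ioo_subset_Icc_self) x hx)
        (cuxt.continuousAt (Icc_mem_nhds hx.1 hx.2))
    refine hFTC.congr_of_eventuallyEq ?_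
    exact Filter.eventually_of_mem (isOpen_Ioo.mem_nhds hx)
      (fun y hy => hrep y (Ioo_subset_Icc_self hy))
  -- integration by parts
  have hGderiv : ∀ x ∈ Ioo (-a) a,
      HasDerivAt (fun y => ut y t₀ * (ux y t₀ / Real.sqrt (1 + (ux y t₀)^2)))
        (uxt x t₀ * (ux x t₀ / Real.sqrt (1 + (ux x t₀)^2))
          + ut x t₀ * (uxx x t₀ / ((1 + (ux x t₀)^2) * Real.sqrt (1 + (ux x t₀)^2)))) x := by
    intro x hx
    have h2' : HasDerivAt (fun y => ux y t₀) (uxx x t₀) x :=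
      (huxx x (Ioo_subset_Icc_self hx) t₀ ht₀').hasDerivAt (Icc_mem_nhds hx.1 hx.2)
    have h3' : HasDerivAt (fun y => ux y t₀ / Real.sqrt (1 + (ux y t₀)^2))
        (uxx x t₀ / ((1 + (ux x t₀)^2) * Real.sqrt (1 + (ux x t₀)^2))) x := by
      have h := (aux_phi_deriv (ux x t₀)).comp x h2'
      refine h.congr_deriv ?_
      ring
    exact (hutx x hx).mul h3'
  have hGcont : ContinuousOn
      (fun y => ut y t₀ * (ux y t₀ / Real.sqrt (1 + (ux y t₀)^2))) (Icc (-a) a) :=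
    cut.mul (cux.div csqrt hsne)
  have hint1 : IntervalIntegrable
      (fun x => uxt x t₀ * (ux x t₀ / Real.sqrt (1 + (ux x t₀)^2))) volume (-a) a :=
    (cuxt.mul (cux.div csqrt hsne)).intervalIntegrable_of_Icc haa
  have hint2 : IntervalIntegrable
      (fun x => ut x t₀ * (uxx x t₀ / ((1 + (ux x t₀)^2) * Real.sqrt (1 + (ux x t₀)^2))))
      volume (-a) a :=
    (cut.mul (cuxx.div ((continuousOn_const.add (cux.pow 2)).mul csqrt)
      (fun x _ => (mul_pos (sq1_pos _) (sqrt1_pos _)).ne'))).intervalIntegrable_of_Icc haa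
  have hint3 : IntervalIntegrable (fun x => ut x t₀) volume (-a) a :=
    cut.intervalIntegrable_of_Icc haa
  have hIBP : (∫ x in (-a)..a, (uxt x t₀ * (ux x t₀ / Real.sqrt (1 + (ux x t₀)^2))
      + ut x t₀ * (uxx x t₀ / ((1 + (ux x t₀)^2) * Real.sqrt (1 + (ux x t₀)^2))))) = 0 := by
    have := integral_eq_sub_of_hasDeriv_right_of_le haa hGcont
      (fun x hx => (hGderiv x hx).hasDerivWithinAt) (hint1.add hint2)
    rw [this, hut0.1, hut0.2]
    ring
  -- PDE rewrite of the integrand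
  have hQ : (∫ x in (-a)..a, (ut x t₀)^2 / Real.sqrt (1 + (ux x t₀)^2))
      = (∫ x in (-a)..a, (ut x t₀ * (uxx x t₀ / ((1 + (ux x t₀)^2) * Real.sqrt (1 + (ux x t₀)^2)))
          + A * ut x t₀)) := by
    apply intervalIntegral.integral_congr_ae
    have hae : ∀ᵐ x : ℝ ∂volume, x ≠ a := by
      have h0 : (volume : Measure ℝ) {a} = 0 := measure_singleton a
      refine ae_iff.mpr ?_
      simpa [not_not, Set.setOf_eq_eq_singleton] using h0
    filter_upwards [hae] with x hxa hxI
    rw [uIoc_of_le haa] at hxI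
    have hxIoo : x ∈ Ioo (-a) a := ⟨hxI.1, lt_of_le_of_ne hxI.2 hxa⟩
    have hpd := hpde x hxIoo t₀ ht₀'
    set s := Real.sqrt (1 + (ux x t₀)^2) with hsdef
    have hs2 : s^2 = 1 + (ux x t₀)^2 := by rw [hsdef]; exact sqrt1_sq _
    have hs0 : s ≠ 0 := by rw [hsdef]; exact (sqrt1_pos _).ne'
    rw [hpd, ← hs2]
    field_simp
  have hsplit1 : (∫ x in (-a)..a, (uxt x t₀ * (ux x t₀ / Real.sqrt (1 + (ux x t₀)^2))
      + ut x t₀ * (uxx x t₀ / ((1 + (ux x t₀)^2) * Real.sqrt (1 + (ux x t₀)^2)))))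
      = (∫ x in (-a)..a, uxt x t₀ * (ux x t₀ / Real.sqrt (1 + (ux x t₀)^2)))
      + (∫ x in (-a)..a, ut x t₀ * (uxx x t₀ / ((1 + (ux x t₀)^2) * Real.sqrt (1 + (ux x t₀)^2)))) :=
    integral_add hint1 hint2
  have hsplit2 : (∫ x in (-a)..a, (ut x t₀ * (uxx x t₀ / ((1 + (ux x t₀)^2) * Real.sqrt (1 + (ux x t₀)^2)))
      + A * ut x t₀))
      = (∫ x in (-a)..a, ut x t₀ * (uxx x t₀ / ((1 + (ux x t₀)^2) * Real.sqrt (1 + (ux x t₀)^2))))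
      + A * (∫ x in (-a)..a, ut x t₀) := by
    rw [integral_add hint2 (hint3.const_mul A), intervalIntegral.integral_const_mul]
  refine ⟨hJ, hI, ?_⟩
  rw [hsplit1] at hIBP
  rw [hsplit2] at hQ
  linarith [hIBP, hQ]
end

section
/- Let A > 0, a > 0, and let u : [−a,a] × (0,∞) → ℝ have u, u_x, u_t, u_xx, u_xt continuous on [−a,a] × (0,∞), satisfy u(−a,t) = u(a,t) = 0 for all t > 0, solve the graph flow equation u_t = u_xx/(1 + u_x²) + A√(1 + u_x²) on (−a,a) × (0,∞), and suppose u is uniformly bounded on [−a,a] × (0,∞). Then for every ε > 0 the integral ∫_ε^∞ ∫_{−a}^{a} u_t(x,t)² / √(1 + u_x(x,t)²) dx dt is finite. -/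
open Set MeasureTheory Filter Topology

lemma sqrt_one_add_sq_pos (v : ℝ) : 0 < Real.sqrt (1 + v ^ 2) :=
  Real.sqrt_pos.2 (by positivity)

lemma hasDerivAt_sqrt_one_add_sq {v : ℝ → ℝ} {v' x : ℝ} (h : HasDerivAt v v' x) :
    HasDerivAt (fun y => Real.sqrt (1 + v y ^ 2)) (v x * v' / Real.sqrt (1 + v x ^ 2)) x := by
  have h1 : HasDerivAt (fun y => 1 + v y ^ 2) (2 * v x ^ 1 * v') x := (h.pow 2).const_add 1
  have hne : (1 + v x ^ 2) ≠ 0 := by positivity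
  have h2 := h1.sqrt hne
  convert h2 using 1
  have hs := sqrt_one_add_sq_pos (v x)
  field_simp

lemma hasDerivAt_div_sqrt {v : ℝ → ℝ} {v' x : ℝ} (h : HasDerivAt v v' x) :
    HasDerivAt (fun y => v y / Real.sqrt (1 + v y ^ 2))
      (v' / ((1 + v x ^ 2) * Real.sqrt (1 + v x ^ 2))) x := by
  have hs := sqrt_one_add_sq_pos (v x)
  have hd := h.div (hasDerivAt_sqrt_one_add_sq h) hs.ne'
  convert hd using 1
  all_goals try rfl
  have hsq : Real.sqrt (1 + v x ^ 2) ^ 2 = 1 + v x ^ 2 := Real.sq_sqrt (by positivity)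
  rw [div_eq_div_iff (by positivity) (by positivity)]
  field_simp
  linear_combination (-(v' * v x ^ 2)) * hsq


lemma slice_t_cont {F : ℝ → ℝ → ℝ} {a : ℝ} {S : Set ℝ}
    (hF : ContinuousOn (fun p : ℝ × ℝ => F p.1 p.2) (Icc (-a) a ×ˢ Ioi 0))
    {y : ℝ} (hy : y ∈ Icc (-a) a) (hS : S ⊆ Ioi 0) :
    ContinuousOn (fun σ => F y σ) S := by
  have he : (fun σ => F y σ) = (fun p : ℝ × ℝ => F p.1 p.2) ∘ (fun σ => (y, σ)) := rfl
  rw [he]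
  exact hF.comp (Continuous.continuousOn (by continuity)) (fun σ hσ => ⟨hy, hS hσ⟩)

lemma slice_x_cont {F : ℝ → ℝ → ℝ} {a : ℝ}
    (hF : ContinuousOn (fun p : ℝ × ℝ => F p.1 p.2) (Icc (-a) a ×ˢ Ioi 0))
    {t : ℝ} (ht : t ∈ Ioi (0:ℝ)) :
    ContinuousOn (fun y => F y t) (Icc (-a) a) := by
  have he : (fun y => F y t) = (fun p : ℝ × ℝ => F p.1 p.2) ∘ (fun y => (y, t)) := rfl
  rw [he]
  exact hF.comp (Continuous.continuousOn (by continuity)) (fun y hy => ⟨hy, ht⟩)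

lemma clairaut_ioo (a : ℝ) (ha : 0 < a) (u ux ut uxt : ℝ → ℝ → ℝ)
    (hux : ∀ x ∈ Icc (-a) a, ∀ t ∈ Ioi (0 : ℝ),
      HasDerivWithinAt (fun y => u y t) (ux x t) (Icc (-a) a) x)
    (hut : ∀ x ∈ Icc (-a) a, ∀ t ∈ Ioi (0 : ℝ),
      HasDerivAt (fun τ => u x τ) (ut x t) t)
    (huxt : ∀ x ∈ Icc (-a) a, ∀ t ∈ Ioi (0 : ℝ),
      HasDerivAt (fun τ => ux x τ) (uxt x t) t)
    (huxt_cont : ContinuousOn (fun p : ℝ × ℝ => uxt p.1 p.2) (Icc (-a) a ×ˢ Ioi 0)) :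
    ∀ t ∈ Ioi (0 : ℝ), ∀ x ∈ Ioo (-a) a, HasDerivAt (fun y => ut y t) (uxt x t) x := by
  intro t ht x hx
  have ht0 : (0 : ℝ) < t := ht
  have hux' : ∀ s ∈ Ioi (0:ℝ), ∀ y ∈ Ioo (-a) a, HasDerivAt (fun z => u z s) (ux y s) y := by
    intro s hs y hy
    exact (hux y (Ioo_subset_Icc_self hy) s hs).hasDerivAt (Icc_mem_nhds hy.1 hy.2)
  set K : Set (ℝ × ℝ) := Icc (-a) a ×ˢ Icc (t / 2) (t + 1) with hK
  have hKsub : K ⊆ Icc (-a) a ×ˢ Ioi 0 := by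
    intro p hp
    exact ⟨hp.1, lt_of_lt_of_le (by linarith) hp.2.1⟩
  have hUC : UniformContinuousOn (fun p : ℝ × ℝ => uxt p.1 p.2) K :=
    (isCompact_Icc.prod isCompact_Icc).uniformContinuousOn_of_continuous (huxt_cont.mono hKsub)
  set h : ℕ → ℝ := fun n => t / (n + 2) with hh
  have hhpos : ∀ n, 0 < h n := fun n => by positivity
  have hhle : ∀ n, h n ≤ t / 2 := by
    intro n
    have h2 : (2:ℝ) ≤ (n:ℝ) + 2 := by
      have : (0:ℝ) ≤ (n:ℝ) := by positivity
      linarith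
    simp only [hh]
    gcongr
  have hhlim : Tendsto h atTop (𝓝 0) := by
    have h1 : Tendsto (fun n : ℕ => ((n : ℝ) + 2)) atTop atTop :=
      tendsto_atTop_add_const_right _ 2 tendsto_natCast_atTop_atTop
    simpa [hh] using Tendsto.div_atTop (tendsto_const_nhds (x := t)) h1
  set φ : ℕ → ℝ → ℝ := fun n y => (u y (t + h n) - u y t) / h n with hφ
  set φ' : ℕ → ℝ → ℝ := fun n y => (ux y (t + h n) - ux y t) / h n with hφ'
  have hφd : ∀ n, ∀ y ∈ Ioo (-a) a, HasDerivAt (φ n) (φ' n y) y := by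
    intro n y hy
    have h1 := hux' (t + h n) (by simp only [mem_Ioi]; positivity) y hy
    have h2 := hux' t ht y hy
    exact (h1.sub h2).div_const (h n)
  have hkey : ∀ n, ∀ y ∈ Icc (-a) a,
      ux y (t + h n) - ux y t = ∫ σ in t..(t + h n), uxt y σ := by
    intro n y hy
    have hd : ∀ σ ∈ uIcc t (t + h n), HasDerivAt (fun τ => ux y τ) (uxt y σ) σ := by
      intro σ hσ
      rw [uIcc_of_le (by linarith [hhpos n])] at hσ
      exact huxt y hy σ (lt_of_lt_of_le ht0 hσ.1)
    have hcont : ContinuousOn (fun σ => uxt y σ) (uIcc t (t + h n)) := by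
      rw [uIcc_of_le (by linarith [hhpos n])]
      exact slice_t_cont huxt_cont hy (fun σ hσ => lt_of_lt_of_le ht0 hσ.1)
    exact (intervalIntegral.integral_eq_sub_of_hasDerivAt hd hcont.intervalIntegrable).symm
  have hUnif : TendstoUniformlyOn φ' (fun y => uxt y t) atTop (Ioo (-a) a) := by
    rw [Metric.tendstoUniformlyOn_iff]
    intro δ hδ
    obtain ⟨r, hr, hruc⟩ := (Metric.uniformContinuousOn_iff).1 hUC (δ / 2) (by linarith)
    obtain ⟨N, hN⟩ := (Metric.tendsto_atTop.1 hhlim) (min r 1) (lt_min hr one_pos)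
    filter_upwards [Filter.eventually_ge_atTop N] with n hn
    intro y hy
    have hyc : y ∈ Icc (-a) a := Ioo_subset_Icc_self hy
    have hhn : h n < min r 1 := by
      have h0 := hN n hn
      rwa [Real.dist_eq, sub_zero, abs_of_pos (hhpos n)] at h0
    have hhnr : h n < r := lt_of_lt_of_le hhn (min_le_left _ _)
    have hhn1 : h n < 1 := lt_of_lt_of_le hhn (min_le_right _ _)
    have hbound : ∀ σ ∈ Set.uIoc t (t + h n), ‖uxt y σ - uxt y t‖ ≤ δ / 2 := by
      intro σ hσ
      rw [uIoc_of_le (by linarith [hhpos n])] at hσ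
      have hσK : (y, σ) ∈ K := ⟨hyc, ⟨by linarith [hσ.1], by linarith [hσ.2]⟩⟩
      have htK : (y, t) ∈ K := ⟨hyc, ⟨by linarith, by linarith⟩⟩
      have hdist : dist ((y, σ) : ℝ × ℝ) (y, t) < r := by
        rw [Prod.dist_eq]
        simp only [dist_self]
        rw [max_lt_iff]
        refine ⟨hr, ?_⟩
        rw [Real.dist_eq, abs_of_pos (by linarith [hσ.1])]
        linarith [hσ.2]
      have h5 := hruc _ hσK _ htK hdist
      rw [Real.dist_eq] at h5
      exact le_of_lt (by simpa [Real.norm_eq_abs] using h5)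
    have he : φ' n y - uxt y t = (∫ σ in t..(t + h n), (uxt y σ - uxt y t)) / h n := by
      have hi1 : IntervalIntegrable (fun σ => uxt y σ) volume t (t + h n) := by
        apply ContinuousOn.intervalIntegrable
        rw [uIcc_of_le (by linarith [hhpos n])]
        exact slice_t_cont huxt_cont hyc (fun σ hσ => lt_of_lt_of_le ht0 hσ.1)
      rw [intervalIntegral.integral_sub hi1 intervalIntegrable_const,
        intervalIntegral.integral_const, ← hkey n y hyc]
      simp only [hφ', smul_eq_mul]
      rw [show t + h n - t = h n by ring]; field_simp [(hhpos n).ne']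
    have h1 : ‖∫ σ in t..(t + h n), (uxt y σ - uxt y t)‖ ≤ δ / 2 * h n := by
      have h2 := intervalIntegral.norm_integral_le_of_norm_le_const hbound
      have h3 : |t + h n - t| = h n := by
        rw [show t + h n - t = h n by ring, abs_of_pos (hhpos n)]
      rwa [h3] at h2
    have h2 : |φ' n y - uxt y t| ≤ δ / 2 := by
      rw [he, abs_div, abs_of_pos (hhpos n), div_le_iff₀ (hhpos n)]
      simpa [Real.norm_eq_abs] using h1
    rw [Real.dist_eq, abs_sub_comm]
    linarith [h2]
  have hptwise : ∀ y ∈ Ioo (-a) a, Tendsto (fun n => φ n y) atTop (𝓝 (ut y t)) := by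
    intro y hy
    have hd := hut y (Ioo_subset_Icc_self hy) t ht
    have hslope := hasDerivAt_iff_tendsto_slope.1 hd
    have hseq : Tendsto (fun n => t + h n) atTop (𝓝[≠] t) := by
      apply tendsto_nhdsWithin_of_tendsto_nhds_of_eventually_within
      · simpa using (tendsto_const_nhds (x := t)).add hhlim
      · filter_upwards with n
        simp only [mem_compl_iff, mem_singleton_iff]
        intro hc
        have := hhpos n
        linarith
    have h6 := hslope.comp hseq
    convert h6 using 1
    funext n
    simp only [Function.comp_apply, hφ, slope_def_field]
    rw [show t + h n - t = h n by ring]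
  exact hasDerivAt_of_tendstoUniformlyOn isOpen_Ioo hUnif
    (Filter.Eventually.of_forall hφd) hptwise hx


set_option maxHeartbeats 1000000 in
/-- For a uniformly bounded global graph-flow solution with fixed
endpoints, the dissipation integral `∫_ε^∞ ∫_{-a}^a u_t²/√(1+u_x²) dx dt` is finite
(i.e. the integrand is integrable on `[ε,∞) × [-a,a]`) for every `ε > 0`. -/
theorem dissipation_integrable (A a : ℝ) (hA : 0 < A) (ha : 0 < a)
    (u ux ut uxx uxt : ℝ → ℝ → ℝ)
    (hu_cont : ContinuousOn (fun p : ℝ × ℝ => u p.1 p.2) (Icc (-a) a ×ˢ Ioi 0))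
    (hux : ∀ x ∈ Icc (-a) a, ∀ t ∈ Ioi (0 : ℝ),
      HasDerivWithinAt (fun y => u y t) (ux x t) (Icc (-a) a) x)
    (huxx : ∀ x ∈ Icc (-a) a, ∀ t ∈ Ioi (0 : ℝ),
      HasDerivWithinAt (fun y => ux y t) (uxx x t) (Icc (-a) a) x)
    (hut : ∀ x ∈ Icc (-a) a, ∀ t ∈ Ioi (0 : ℝ),
      HasDerivAt (fun τ => u x τ) (ut x t) t)
    (huxt : ∀ x ∈ Icc (-a) a, ∀ t ∈ Ioi (0 : ℝ),
      HasDerivAt (fun τ => ux x τ) (uxt x t) t)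
    (hux_cont : ContinuousOn (fun p : ℝ × ℝ => ux p.1 p.2) (Icc (-a) a ×ˢ Ioi 0))
    (hut_cont : ContinuousOn (fun p : ℝ × ℝ => ut p.1 p.2) (Icc (-a) a ×ˢ Ioi 0))
    (huxx_cont : ContinuousOn (fun p : ℝ × ℝ => uxx p.1 p.2) (Icc (-a) a ×ˢ Ioi 0))
    (huxt_cont : ContinuousOn (fun p : ℝ × ℝ => uxt p.1 p.2) (Icc (-a) a ×ˢ Ioi 0))
    (hbc : ∀ t ∈ Ioi (0 : ℝ), u (-a) t = 0 ∧ u a t = 0)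
    (hpde : ∀ x ∈ Ioo (-a) a, ∀ t ∈ Ioi (0 : ℝ),
      ut x t = uxx x t / (1 + (ux x t) ^ 2) + A * Real.sqrt (1 + (ux x t) ^ 2))
    (hbdd : ∃ M : ℝ, ∀ x ∈ Icc (-a) a, ∀ t ∈ Ioi (0 : ℝ), |u x t| ≤ M) :
    ∀ ε : ℝ, 0 < ε →
      IntegrableOn
        (fun p : ℝ × ℝ => (ut p.2 p.1) ^ 2 / Real.sqrt (1 + (ux p.2 p.1) ^ 2))
        (Ici ε ×ˢ Icc (-a) a) := by
  obtain ⟨M, hM⟩ := hbdd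
  intro ε hε
  have haa : -a ≤ a := by linarith
  have hM0 : 0 ≤ M := le_trans (abs_nonneg _) (hM (-a) ⟨le_refl _, haa⟩ 1 (by norm_num))
  have hutx := clairaut_ioo a ha u ux ut uxt hux hut huxt huxt_cont
  have huxx' : ∀ t ∈ Ioi (0:ℝ), ∀ x ∈ Ioo (-a) a,
      HasDerivAt (fun y => ux y t) (uxx x t) x := by
    intro t ht x hx
    exact (huxx x (Ioo_subset_Icc_self hx) t ht).hasDerivAt (Icc_mem_nhds hx.1 hx.2)
  have hbt : ∀ t ∈ Ioi (0:ℝ), ut (-a) t = 0 ∧ ut a t = 0 := by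
    intro t ht
    constructor
    · have hev : (fun τ => u (-a) τ) =ᶠ[𝓝 t] (fun _ => (0:ℝ)) :=
        Filter.eventually_of_mem (Ioi_mem_nhds ht) (fun τ hτ => (hbc τ hτ).1)
      have h0 : HasDerivAt (fun τ => u (-a) τ) 0 t :=
        (hasDerivAt_const t (0:ℝ)).congr_of_eventuallyEq hev
      exact (hut (-a) ⟨le_refl _, haa⟩ t ht).unique h0
    · have hev : (fun τ => u a τ) =ᶠ[𝓝 t] (fun _ => (0:ℝ)) :=
        Filter.eventually_of_mem (Ioi_mem_nhds ht) (fun τ hτ => (hbc τ hτ).2)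
      have h0 : HasDerivAt (fun τ => u a τ) 0 t :=
        (hasDerivAt_const t (0:ℝ)).congr_of_eventuallyEq hev
      exact (hut a ⟨haa, le_refl _⟩ t ht).unique h0
  set F : ℝ → ℝ → ℝ := fun x t => ut x t ^ 2 / Real.sqrt (1 + ux x t ^ 2) with hF
  set G : ℝ → ℝ → ℝ := fun x t =>
    A * ut x t - ux x t * uxt x t / Real.sqrt (1 + ux x t ^ 2) with hG
  have hFnn : ∀ x t, 0 ≤ F x t := fun x t => by
    simp only [hF]; positivity
  have hsqC : ContinuousOn (fun p : ℝ × ℝ => Real.sqrt (1 + ux p.1 p.2 ^ 2))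
      (Icc (-a) a ×ˢ Ioi 0) :=
    Real.continuous_sqrt.comp_continuousOn (continuousOn_const.add (hux_cont.pow 2))
  have hFC : ContinuousOn (fun p : ℝ × ℝ => F p.1 p.2) (Icc (-a) a ×ˢ Ioi 0) := by
    simp only [hF]
    exact (hut_cont.pow 2).div hsqC (fun p _ => (sqrt_one_add_sq_pos _).ne')
  have hGC : ContinuousOn (fun p : ℝ × ℝ => G p.1 p.2) (Icc (-a) a ×ˢ Ioi 0) := by
    simp only [hG]
    exact (continuousOn_const.mul hut_cont).sub
      ((hux_cont.mul huxt_cont).div hsqC (fun p _ => (sqrt_one_add_sq_pos _).ne'))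
  -- Step 1: integration by parts + PDE, for each fixed time
  have hstep : ∀ t ∈ Ioi (0:ℝ),
      ∫ x in Icc (-a) a, F x t = ∫ x in Icc (-a) a, G x t := by
    intro t ht
    set w : ℝ → ℝ := fun x => ut x t * (ux x t / Real.sqrt (1 + ux x t ^ 2)) with hw
    set w' : ℝ → ℝ := fun x => uxt x t * (ux x t / Real.sqrt (1 + ux x t ^ 2))
        + ut x t * (uxx x t / ((1 + ux x t ^ 2) * Real.sqrt (1 + ux x t ^ 2))) with hw'
    have hwd : ∀ x ∈ Ioo (-a) a, HasDerivAt w (w' x) x := by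
      intro x hx
      exact (hutx t ht x hx).mul (hasDerivAt_div_sqrt (huxx' t ht x hx))
    have hsqt : ContinuousOn (fun x => Real.sqrt (1 + ux x t ^ 2)) (Icc (-a) a) := by
      apply Real.continuous_sqrt.comp_continuousOn
      exact continuousOn_const.add ((slice_x_cont hux_cont ht).pow 2)
    have hwc : ContinuousOn w (Icc (-a) a) := by
      simp only [hw]
      exact (slice_x_cont hut_cont ht).mul ((slice_x_cont hux_cont ht).div hsqt
        (fun x _ => (sqrt_one_add_sq_pos _).ne'))
    have hw'c : ContinuousOn w' (Icc (-a) a) := by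
      simp only [hw']
      apply ContinuousOn.add
      · exact (slice_x_cont huxt_cont ht).mul ((slice_x_cont hux_cont ht).div hsqt
          (fun x _ => (sqrt_one_add_sq_pos _).ne'))
      · refine (slice_x_cont hut_cont ht).mul ((slice_x_cont huxx_cont ht).div
          (ContinuousOn.mul ?_ hsqt) (fun x _ => ?_))
        · exact continuousOn_const.add ((slice_x_cont hux_cont ht).pow 2)
        · exact mul_ne_zero (by positivity) (sqrt_one_add_sq_pos _).ne'
    have hftc : ∫ y in (-a)..a, w' y = w a - w (-a) :=
      intervalIntegral.integral_eq_sub_of_hasDeriv_right_of_le haa hwc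
        (fun x hx => (hwd x hx).hasDerivWithinAt)
        (ContinuousOn.intervalIntegrable (by rw [uIcc_of_le haa]; exact hw'c))
    have hw0 : ∫ x in Ioo (-a) a, w' x = 0 := by
      have h1 : ∫ x in Icc (-a) a, w' x = ∫ y in (-a)..a, w' y := by
        rw [MeasureTheory.integral_Icc_eq_integral_Ioc, intervalIntegral.integral_of_le haa]
      rw [← MeasureTheory.integral_Icc_eq_integral_Ioo, h1, hftc]
      simp [hw, (hbt t ht).1, (hbt t ht).2]
    have hfg : ∀ x ∈ Ioo (-a) a, F x t = G x t + w' x := by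
      intro x hx
      have hpd := hpde x hx t ht
      have hs0 := sqrt_one_add_sq_pos (ux x t)
      have hsq : Real.sqrt (1 + ux x t ^ 2) ^ 2 = 1 + ux x t ^ 2 :=
        Real.sq_sqrt (by positivity)
      have h1p : (0:ℝ) < 1 + ux x t ^ 2 := by positivity
      have huxx_eq : uxx x t
          = (ut x t - A * Real.sqrt (1 + ux x t ^ 2)) * (1 + ux x t ^ 2) := by
        field_simp at hpd
        linarith
      simp only [hF, hG, hw']
      rw [huxx_eq]
      field_simp
      ring_nf
    have hGi : IntegrableOn (fun x => G x t) (Ioo (-a) a) :=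
      ((slice_x_cont hGC ht).integrableOn_compact isCompact_Icc).mono_set Ioo_subset_Icc_self
    have hw'i : IntegrableOn w' (Ioo (-a) a) :=
      (hw'c.integrableOn_compact isCompact_Icc).mono_set Ioo_subset_Icc_self
    calc ∫ x in Icc (-a) a, F x t
        = ∫ x in Ioo (-a) a, F x t := MeasureTheory.integral_Icc_eq_integral_Ioo
      _ = ∫ x in Ioo (-a) a, (G x t + w' x) := setIntegral_congr_fun measurableSet_Ioo hfg
      _ = (∫ x in Ioo (-a) a, G x t) + ∫ x in Ioo (-a) a, w' x := integral_add hGi hw'i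
      _ = ∫ x in Icc (-a) a, G x t := by
          rw [hw0, add_zero, ← MeasureTheory.integral_Icc_eq_integral_Ioo]
  -- Step 2: fundamental theorem of calculus in time
  have hFTCt : ∀ x ∈ Icc (-a) a, ∀ T, ε ≤ T →
      ∫ τ in Icc ε T, G x τ =
        (A * u x T - Real.sqrt (1 + ux x T ^ 2))
          - (A * u x ε - Real.sqrt (1 + ux x ε ^ 2)) := by
    intro x hx T hT
    have hder : ∀ τ ∈ uIcc ε T,
        HasDerivAt (fun σ => A * u x σ - Real.sqrt (1 + ux x σ ^ 2)) (G x τ) τ := by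
      intro τ hτ
      rw [uIcc_of_le hT] at hτ
      have hτ0 : τ ∈ Ioi (0:ℝ) := lt_of_lt_of_le hε hτ.1
      have h1 := (hut x hx τ hτ0).const_mul A
      have h2 := hasDerivAt_sqrt_one_add_sq (huxt x hx τ hτ0)
      exact h1.sub h2
    have hint : IntervalIntegrable (fun τ => G x τ) volume ε T := by
      apply ContinuousOn.intervalIntegrable
      rw [uIcc_of_le hT]
      exact slice_t_cont hGC hx (fun τ hτ => lt_of_lt_of_le hε hτ.1)
    rw [MeasureTheory.integral_Icc_eq_integral_Ioc, ← intervalIntegral.integral_of_le hT]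
    exact intervalIntegral.integral_eq_sub_of_hasDerivAt hder hint
  -- the uniform bound
  set C : ℝ := ∫ x in Icc (-a) a, (2 * (A * M) + Real.sqrt (1 + ux x ε ^ 2)) with hC
  have hbound : ∀ n : ℕ, ∫⁻ p in Icc ε (ε + (n:ℝ)) ×ˢ Icc (-a) a,
      ENNReal.ofReal (F p.2 p.1) ≤ ENNReal.ofReal C := by
    intro n
    set T : ℝ := ε + (n:ℝ) with hT'
    have hT : ε ≤ T := by
      simp only [hT', le_add_iff_nonneg_right]
      positivity
    have hFsw : ContinuousOn (fun p : ℝ × ℝ => F p.2 p.1) (Icc ε T ×ˢ Icc (-a) a) := by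
      have he : (fun p : ℝ × ℝ => F p.2 p.1) = (fun q : ℝ × ℝ => F q.1 q.2) ∘ Prod.swap := rfl
      rw [he]
      exact hFC.comp continuous_swap.continuousOn
        (fun p hp => ⟨hp.2, lt_of_lt_of_le hε hp.1.1⟩)
    have hGsw : ContinuousOn (fun p : ℝ × ℝ => G p.2 p.1) (Icc ε T ×ˢ Icc (-a) a) := by
      have he : (fun p : ℝ × ℝ => G p.2 p.1) = (fun q : ℝ × ℝ => G q.1 q.2) ∘ Prod.swap := rfl
      rw [he]
      exact hGC.comp continuous_swap.continuousOn
        (fun p hp => ⟨hp.2, lt_of_lt_of_le hε hp.1.1⟩)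
    have hFint : IntegrableOn (fun p : ℝ × ℝ => F p.2 p.1) (Icc ε T ×ˢ Icc (-a) a) :=
      hFsw.integrableOn_compact (isCompact_Icc.prod isCompact_Icc)
    have hGint : IntegrableOn (fun p : ℝ × ℝ => G p.2 p.1) (Icc ε T ×ˢ Icc (-a) a) :=
      hGsw.integrableOn_compact (isCompact_Icc.prod isCompact_Icc)
    have h1 : ∫⁻ p in Icc ε T ×ˢ Icc (-a) a, ENNReal.ofReal (F p.2 p.1)
        = ENNReal.ofReal (∫ p in Icc ε T ×ˢ Icc (-a) a, F p.2 p.1) :=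
      (MeasureTheory.ofReal_integral_eq_lintegral_ofReal hFint
        (Filter.Eventually.of_forall (fun p => hFnn _ _))).symm
    rw [h1]
    apply ENNReal.ofReal_le_ofReal
    have h2 : ∫ p in Icc ε T ×ˢ Icc (-a) a, F p.2 p.1
        = ∫ t in Icc ε T, ∫ x in Icc (-a) a, F x t :=
      MeasureTheory.setIntegral_prod _ hFint
    have h3 : ∫ t in Icc ε T, ∫ x in Icc (-a) a, F x t
        = ∫ t in Icc ε T, ∫ x in Icc (-a) a, G x t :=
      setIntegral_congr_fun measurableSet_Icc (fun t ht => hstep t (lt_of_lt_of_le hε ht.1))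
    have hGunc : Integrable (Function.uncurry (fun t x => G x t))
        ((volume.restrict (Icc ε T)).prod (volume.restrict (Icc (-a) a))) := by
      rw [Measure.prod_restrict]
      exact hGint
    have h4 : ∫ t in Icc ε T, ∫ x in Icc (-a) a, G x t
        = ∫ x in Icc (-a) a, ∫ t in Icc ε T, G x t :=
      MeasureTheory.integral_integral_swap hGunc
    rw [h2, h3, h4]
    have h5 : ∀ x ∈ Icc (-a) a,
        ∫ t in Icc ε T, G x t ≤ 2 * (A * M) + Real.sqrt (1 + ux x ε ^ 2) := by
      intro x hx
      rw [hFTCt x hx T hT]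
      have hu1 := abs_le.1 (hM x hx T (lt_of_lt_of_le hε hT))
      have hu2 := abs_le.1 (hM x hx ε hε)
      have hs1 := Real.sqrt_nonneg (1 + ux x T ^ 2)
      have e1 : A * u x T ≤ A * M := mul_le_mul_of_nonneg_left hu1.2 hA.le
      have e2 : A * (-M) ≤ A * u x ε := mul_le_mul_of_nonneg_left hu2.1 hA.le
      nlinarith
    have h6 : IntegrableOn (fun x => ∫ t in Icc ε T, G x t) (Icc (-a) a) := by
      exact hGunc.integral_prod_right
    have h7 : IntegrableOn (fun x => 2 * (A * M) + Real.sqrt (1 + ux x ε ^ 2))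
        (Icc (-a) a) := by
      apply ContinuousOn.integrableOn_compact isCompact_Icc
      apply continuousOn_const.add
      apply Real.continuous_sqrt.comp_continuousOn
      exact continuousOn_const.add ((slice_x_cont hux_cont hε).pow 2)
    exact setIntegral_mono_on h6 h7 measurableSet_Icc h5
  -- conclusion via monotone convergence
  have hSm : MeasurableSet (Ici ε ×ˢ Icc (-a) a) :=
    measurableSet_Ici.prod measurableSet_Icc
  have hFswS : ContinuousOn (fun p : ℝ × ℝ => F p.2 p.1) (Ici ε ×ˢ Icc (-a) a) := by
    have he : (fun p : ℝ × ℝ => F p.2 p.1) = (fun q : ℝ × ℝ => F q.1 q.2) ∘ Prod.swap := rfl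
    rw [he]
    exact hFC.comp continuous_swap.continuousOn
      (fun p hp => ⟨hp.2, lt_of_lt_of_le hε hp.1⟩)
  suffices hgoal : IntegrableOn (fun p : ℝ × ℝ => F p.2 p.1) (Ici ε ×ˢ Icc (-a) a) by
    simpa only [hF] using hgoal
  refine ⟨hFswS.aestronglyMeasurable hSm, ?_⟩
  rw [hasFiniteIntegral_iff_norm]
  set G2 : ℝ × ℝ → ENNReal := fun p => ENNReal.ofReal (F p.2 p.1) with hG2
  have hnormeq : ∫⁻ p in Ici ε ×ˢ Icc (-a) a, ENNReal.ofReal ‖F p.2 p.1‖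
      = ∫⁻ p in Ici ε ×ˢ Icc (-a) a, G2 p := by
    apply lintegral_congr
    intro p
    rw [hG2, Real.norm_of_nonneg (hFnn _ _)]
  rw [hnormeq]
  set Sn : ℕ → Set (ℝ × ℝ) := fun n => Icc ε (ε + (n:ℝ)) ×ˢ Icc (-a) a with hSn
  have hSnm : ∀ n, MeasurableSet (Sn n) := fun n => measurableSet_Icc.prod measurableSet_Icc
  have hSnmono : ∀ {m n : ℕ}, m ≤ n → Sn m ⊆ Sn n := by
    intro m n hmn
    apply Set.prod_mono _ subset_rfl
    apply Icc_subset_Icc_right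
    have : (m:ℝ) ≤ (n:ℝ) := Nat.cast_le.2 hmn
    linarith
  have hSnsub : ∀ n, Sn n ⊆ Ici ε ×ˢ Icc (-a) a :=
    fun n => Set.prod_mono Icc_subset_Ici_self subset_rfl
  have hcover : ∀ p ∈ Ici ε ×ˢ Icc (-a) a, ∃ n, p ∈ Sn n := by
    intro p hp
    obtain ⟨n, hn⟩ := exists_nat_ge (p.1 - ε)
    exact ⟨n, ⟨⟨hp.1, by linarith⟩, hp.2⟩⟩
  have hind : ∀ p : ℝ × ℝ,
      (⨆ n, (Sn n).indicator G2 p) = (Ici ε ×ˢ Icc (-a) a).indicator G2 p := by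
    intro p
    by_cases hp : p ∈ Ici ε ×ˢ Icc (-a) a
    · rw [indicator_of_mem hp]
      obtain ⟨n, hn⟩ := hcover p hp
      apply le_antisymm
      · apply iSup_le
        intro m
        by_cases hm : p ∈ Sn m
        · rw [indicator_of_mem hm]
        · rw [indicator_of_notMem hm]; exact zero_le
      · exact le_iSup_of_le n (by rw [indicator_of_mem hn])
    · have hnot : ∀ n, p ∉ Sn n := fun n hmem => hp (hSnsub n hmem)
      simp [indicator_of_notMem hp, indicator_of_notMem (hnot _)]
  have hmeasn : ∀ n, AEMeasurable ((Sn n).indicator G2) volume := by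
    intro n
    rw [aemeasurable_indicator_iff (hSnm n)]
    have hc : ContinuousOn (fun p : ℝ × ℝ => F p.2 p.1) (Sn n) := hFswS.mono (hSnsub n)
    exact (hc.aemeasurable (hSnm n)).ennreal_ofReal
  have hmono2 : ∀ p, Monotone fun n => (Sn n).indicator G2 p := by
    intro p m n hmn
    exact indicator_le_indicator_of_subset (hSnmono hmn) (fun _ => zero_le) p
  have hfin : ∫⁻ p in Ici ε ×ˢ Icc (-a) a, G2 p ≤ ENNReal.ofReal C := by
    calc ∫⁻ p in Ici ε ×ˢ Icc (-a) a, G2 p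
        = ∫⁻ p, (Ici ε ×ˢ Icc (-a) a).indicator G2 p := (lintegral_indicator hSm G2).symm
      _ = ∫⁻ p, ⨆ n, (Sn n).indicator G2 p := lintegral_congr (fun p => (hind p).symm)
      _ = ⨆ n, ∫⁻ p, (Sn n).indicator G2 p :=
          lintegral_iSup' hmeasn (Filter.Eventually.of_forall hmono2)
      _ = ⨆ n, ∫⁻ p in Sn n, G2 p := by
          refine iSup_congr (fun n => ?_)
          exact lintegral_indicator (hSnm n) G2
      _ ≤ ENNReal.ofReal C := iSup_le (fun n => hbound n)
  exact lt_of_le_of_lt hfin ENNReal.ofReal_lt_top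
end

section
/- Let A > 0, a > 0, T > 0, and let ρ : [0,π] × (0,T) → (0,∞) be such that ρ, ρ_θ, ρ_θθ, ρ_t, ρ_θt are continuous on [0,π] × (0,T), ρ(0,t) = ρ(π,t) = a for all t, and ρ solves the polar flow equation ρ_t = ρ_θθ/(ρ² + ρ_θ²) − (2ρ_θ² + ρ²)/(ρ(ρ_θ² + ρ²)) + (A/ρ)√(ρ_θ² + ρ²) on (0,π) × (0,T). Define the length L(t) = ∫₀^π √(ρ² + ρ_θ²) dθ, the area S(t) = (1/2)∫₀^π ρ² dθ, and the curvature κ(θ,t) = (ρ² + 2ρ_θ² − ρρ_θθ)/(ρ² + ρ_θ²)^{3/2}. Then L and S are differentiable on (0,T) and for every t ∈ (0,T): L′(t) = −∫₀^π (κ − A)² √(ρ² + ρ_θ²) dθ + A·S′(t). -/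
open Set Filter Metric Asymptotics
open scoped Topology

lemma tendsto_shift_punctured (t : ℝ) :
    Tendsto (fun h : ℝ => t + h) (𝓝[≠] (0:ℝ)) (𝓝[≠] t) := by
  rw [tendsto_nhdsWithin_iff]
  constructor
  · have : Tendsto (fun h : ℝ => t + h) (𝓝 0) (𝓝 (t + 0)) :=
      (continuous_const.add continuous_id).tendsto 0
    simpa using this.mono_left nhdsWithin_le_nhds
  · filter_upwards [self_mem_nhdsWithin] with h (hh : h ≠ 0)
    simpa using hh

lemma mixed_deriv_swap {f fθ ft fθt : ℝ → ℝ → ℝ} {s u : Set ℝ}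
    (hs : Convex ℝ s) (hu : IsOpen u)
    (hfθ : ∀ θ ∈ s, ∀ t ∈ u, HasDerivWithinAt (fun φ => f φ t) (fθ θ t) s θ)
    (hft : ∀ θ ∈ s, ∀ t ∈ u, HasDerivAt (fun τ => f θ τ) (ft θ t) t)
    (hfθt : ∀ θ ∈ s, ∀ t ∈ u, HasDerivAt (fun τ => fθ θ τ) (fθt θ t) t)
    (hcont : ContinuousOn (fun p : ℝ × ℝ => fθt p.1 p.2) (s ×ˢ u))
    {θ₀ t : ℝ} (hθ₀ : θ₀ ∈ s) (ht : t ∈ u) :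
    HasDerivWithinAt (fun θ => ft θ t) (fθt θ₀ t) s θ₀ := by
  set c := fθt θ₀ t with hc
  rw [hasDerivWithinAt_iff_isLittleO]
  refine Asymptotics.isLittleO_iff.mpr ?_
  intro ε hε
  -- continuity of fθt at (θ₀, t) within the product set
  have hcw := hcont (θ₀, t) ⟨hθ₀, ht⟩
  rw [Metric.continuousWithinAt_iff] at hcw
  obtain ⟨δ, hδpos, hδ⟩ := hcw ε hε
  obtain ⟨r, hrpos, hrball⟩ := Metric.isOpen_iff.mp hu t ht
  set δ' := min δ r with hδ'def
  have hδ'pos : 0 < δ' := lt_min hδpos hrpos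
  have hδ'δ : δ' ≤ δ := min_le_left _ _
  have hδ'r : δ' ≤ r := min_le_right _ _
  have hmemu : ∀ τ : ℝ, |τ - t| < δ' → τ ∈ u := by
    intro τ hτ
    exact hrball (by simpa [Real.dist_eq] using lt_of_lt_of_le hτ hδ'r)
  -- key estimate
  have key : ∀ θ ∈ s, |θ - θ₀| < δ' →
      |ft θ t - ft θ₀ t - (θ - θ₀) * c| ≤ ε * |θ - θ₀| := by
    intro θ hθ hθδ
    -- inner MVT bound
    have inner : ∀ h : ℝ, |h| < δ' → ∀ x ∈ s, |x - θ₀| < δ' →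
        |fθ x (t + h) - fθ x t - h * c| ≤ ε * |h| := by
      intro h hh x hx hxδ
      have hsubu : uIcc t (t + h) ⊆ u := by
        intro τ hτ
        refine hmemu τ ?_
        have : dist τ t ≤ dist t (t + h) := by
          simpa [dist_comm] using Real.dist_left_le_of_mem_uIcc hτ
        have h2 : dist t (t + h) = |h| := by simp [Real.dist_eq, abs_sub_comm]
        calc |τ - t| = dist τ t := (Real.dist_eq _ _).symm
          _ ≤ |h| := by rw [← h2]; exact this
          _ < δ' := hh
      have hderiv : ∀ τ ∈ uIcc t (t + h),
          HasDerivWithinAt (fun τ => fθ x τ - τ * c) (fθt x τ - c) (uIcc t (t + h)) τ := by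
        intro τ hτ
        exact ((hfθt x hx τ (hsubu hτ)).sub (hasDerivAt_mul_const c)).hasDerivWithinAt
      have hbound : ∀ τ ∈ uIcc t (t + h), ‖fθt x τ - c‖ ≤ ε := by
        intro τ hτ
        have hτu : τ ∈ u := hsubu hτ
        have hd : dist (x, τ) (θ₀, t) < δ := by
          rw [Prod.dist_eq]
          refine max_lt ?_ ?_
          · simpa [Real.dist_eq] using lt_of_lt_of_le hxδ hδ'δ
          · have : dist τ t ≤ |h| := by
              have := Real.dist_left_le_of_mem_uIcc hτ
              simpa [dist_comm, Real.dist_eq, abs_sub_comm] using this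
            exact lt_of_le_of_lt this (lt_of_lt_of_le hh hδ'δ)
        have := hδ ⟨hx, hτu⟩ hd
        rw [Real.dist_eq] at this
        exact le_of_lt (by simpa [hc] using this)
      have := Convex.norm_image_sub_le_of_norm_hasDerivWithin_le hderiv hbound
        (convex_uIcc _ _) (left_mem_uIcc) (right_mem_uIcc)
      have h3 : (fθ x (t + h) - (t + h) * c) - (fθ x t - t * c)
          = fθ x (t + h) - fθ x t - h * c := by ring
      have h4 : (t + h) - t = h := by ring
      calc |fθ x (t + h) - fθ x t - h * c|
          = ‖(fθ x (t + h) - (t + h) * c) - (fθ x t - t * c)‖ := by rw [h3]; rfl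
        _ ≤ ε * ‖(t + h) - t‖ := this
        _ = ε * |h| := by rw [h4]; rfl
    -- outer MVT bound on the numerator
    have huIcc : uIcc θ₀ θ ⊆ s := hs.ordConnected.uIcc_subset hθ₀ hθ
    have outer : ∀ h : ℝ, |h| < δ' →
        |(f θ (t + h) - f θ t) - (f θ₀ (t + h) - f θ₀ t) - (θ - θ₀) * (h * c)|
          ≤ ε * |h| * |θ - θ₀| := by
      intro h hh
      have hthu : t + h ∈ u := hmemu _ (by simpa using hh)
      have hderiv : ∀ x ∈ uIcc θ₀ θ,
          HasDerivWithinAt (fun x => f x (t + h) - f x t - x * (h * c))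
            (fθ x (t + h) - fθ x t - h * c) (uIcc θ₀ θ) x := by
        intro x hx
        have h1 := (hfθ x (huIcc hx) (t + h) hthu).mono huIcc
        have h2 := (hfθ x (huIcc hx) t ht).mono huIcc
        have h3 : HasDerivWithinAt (fun y : ℝ => y * (h * c)) (h * c) (uIcc θ₀ θ) x :=
          (hasDerivAt_mul_const (h * c)).hasDerivWithinAt
        simpa using (h1.fun_sub h2).fun_sub h3
      have hbound : ∀ x ∈ uIcc θ₀ θ, ‖fθ x (t + h) - fθ x t - h * c‖ ≤ ε * |h| := by
        intro x hx
        have hxs : x ∈ s := huIcc hx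
        have hxδ : |x - θ₀| < δ' := by
          have h1 := Real.dist_left_le_of_mem_uIcc hx
          rw [Real.dist_eq, Real.dist_eq] at h1
          calc |x - θ₀| = |θ₀ - x| := abs_sub_comm _ _
            _ ≤ |θ₀ - θ| := h1
            _ = |θ - θ₀| := abs_sub_comm _ _
            _ < δ' := hθδ
        exact inner h hh x hxs hxδ
      have := Convex.norm_image_sub_le_of_norm_hasDerivWithin_le hderiv hbound
        (convex_uIcc _ _) (left_mem_uIcc) (right_mem_uIcc)
      have h3 : (f θ (t + h) - f θ t - θ * (h * c)) - (f θ₀ (t + h) - f θ₀ t - θ₀ * (h * c))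
          = (f θ (t + h) - f θ t) - (f θ₀ (t + h) - f θ₀ t) - (θ - θ₀) * (h * c) := by ring
      calc |(f θ (t + h) - f θ t) - (f θ₀ (t + h) - f θ₀ t) - (θ - θ₀) * (h * c)|
          = ‖(f θ (t + h) - f θ t - θ * (h * c)) - (f θ₀ (t + h) - f θ₀ t - θ₀ * (h * c))‖ := by
            rw [h3]; rfl
        _ ≤ ε * |h| * ‖θ - θ₀‖ := this
        _ = ε * |h| * |θ - θ₀| := rfl
    -- pass to the limit h → 0
    have hslope1 : Tendsto (fun h : ℝ => (f θ (t + h) - f θ t) / h) (𝓝[≠] 0) (𝓝 (ft θ t)) := by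
      have H := hasDerivAt_iff_tendsto_slope.mp (hft θ hθ t ht)
      have := H.comp (tendsto_shift_punctured t)
      refine this.congr' ?_
      filter_upwards [self_mem_nhdsWithin] with h (hh : h ≠ 0)
      simp only [Function.comp, slope_def_field, add_sub_cancel_left]
    have hslope0 : Tendsto (fun h : ℝ => (f θ₀ (t + h) - f θ₀ t) / h) (𝓝[≠] 0)
        (𝓝 (ft θ₀ t)) := by
      have H := hasDerivAt_iff_tendsto_slope.mp (hft θ₀ hθ₀ t ht)
      have := H.comp (tendsto_shift_punctured t)
      refine this.congr' ?_
      filter_upwards [self_mem_nhdsWithin] with h (hh : h ≠ 0)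
      simp only [Function.comp, slope_def_field, add_sub_cancel_left]
    have hQ : Tendsto (fun h : ℝ =>
        |(f θ (t + h) - f θ t) / h - (f θ₀ (t + h) - f θ₀ t) / h - (θ - θ₀) * c|)
        (𝓝[≠] 0) (𝓝 |ft θ t - ft θ₀ t - (θ - θ₀) * c|) :=
      ((hslope1.sub hslope0).sub tendsto_const_nhds).abs
    refine le_of_tendsto hQ ?_
    have hball : ∀ᶠ h in 𝓝[≠] (0:ℝ), |h| < δ' := by
      refine eventually_nhdsWithin_of_eventually_nhds ?_
      filter_upwards [Metric.ball_mem_nhds (0:ℝ) hδ'pos] with h hh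
      simpa [Real.dist_eq] using hh
    filter_upwards [hball, self_mem_nhdsWithin] with h hh (hne : h ≠ 0)
    have hN := outer h hh
    have heq : (f θ (t + h) - f θ t) / h - (f θ₀ (t + h) - f θ₀ t) / h - (θ - θ₀) * c
        = ((f θ (t + h) - f θ t) - (f θ₀ (t + h) - f θ₀ t) - (θ - θ₀) * (h * c)) / h := by
      field_simp
    rw [heq, abs_div, div_le_iff₀ (abs_pos.mpr hne)]
    calc |(f θ (t + h) - f θ t) - (f θ₀ (t + h) - f θ₀ t) - (θ - θ₀) * (h * c)|
        ≤ ε * |h| * |θ - θ₀| := hN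
      _ = ε * |θ - θ₀| * |h| := by ring
  have hball : ∀ᶠ θ in 𝓝[s] θ₀, |θ - θ₀| < δ' := by
    refine eventually_nhdsWithin_of_eventually_nhds ?_
    filter_upwards [Metric.ball_mem_nhds θ₀ hδ'pos] with θ hθ
    simpa [Real.dist_eq] using hθ
  filter_upwards [hball, self_mem_nhdsWithin] with θ h1 h2
  simpa [Real.norm_eq_abs, smul_eq_mul] using key θ h2 h1
open Set Filter Metric MeasureTheory intervalIntegral
open scoped Topology

lemma param_deriv {F F' : ℝ → ℝ → ℝ} {b T : ℝ} (hb : 0 ≤ b) {t : ℝ} (ht : t ∈ Ioo (0:ℝ) T)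
    (hF_cont : ∀ x ∈ Ioo (0:ℝ) T, ContinuousOn (fun θ => F θ x) (Icc 0 b))
    (hF'_cont : ContinuousOn (fun p : ℝ × ℝ => F' p.1 p.2) (Icc 0 b ×ˢ Ioo 0 T))
    (h_diff : ∀ θ ∈ Icc 0 b, ∀ x ∈ Ioo (0:ℝ) T, HasDerivAt (fun x => F θ x) (F' θ x) x) :
    HasDerivAt (fun x => ∫ θ in (0:ℝ)..b, F θ x) (∫ θ in (0:ℝ)..b, F' θ t) t := by
  obtain ⟨ht0, htT⟩ := ht
  set ε := min t (T - t) / 2 with hεdef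
  have hεpos : 0 < ε := by
    have : 0 < min t (T - t) := lt_min ht0 (by linarith)
    positivity
  have hball : Metric.ball t ε ⊆ Ioo (0:ℝ) T := by
    intro x hx
    rw [Metric.mem_ball, Real.dist_eq, abs_sub_lt_iff] at hx
    have h1 : ε ≤ t / 2 := by
      have := min_le_left t (T - t); rw [hεdef]; linarith
    have h2 : ε ≤ (T - t) / 2 := by
      have := min_le_right t (T - t); rw [hεdef]; linarith
    constructor <;> [linarith [hx.2]; linarith [hx.1]]
  have hIcc : Icc (t - ε) (t + ε) ⊆ Ioo (0:ℝ) T := by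
    intro x hx
    have h1 : ε ≤ t / 2 := by
      have := min_le_left t (T - t); rw [hεdef]; linarith
    have h2 : ε ≤ (T - t) / 2 := by
      have := min_le_right t (T - t); rw [hεdef]; linarith
    exact ⟨by linarith [hx.1], by linarith [hx.2]⟩
  -- bound
  have hK : IsCompact (Icc (0:ℝ) b ×ˢ Icc (t - ε) (t + ε)) := isCompact_Icc.prod isCompact_Icc
  obtain ⟨M, hM⟩ := hK.exists_bound_of_continuousOn
    (hF'_cont.mono (prod_mono_right hIcc))
  have hΙ : uIoc (0:ℝ) b = Ioc 0 b := uIoc_of_le hb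
  have huIcc : uIcc (0:ℝ) b = Icc 0 b := uIcc_of_le hb
  have key := intervalIntegral.hasDerivAt_integral_of_dominated_loc_of_deriv_le
    (F := fun x θ => F θ x) (F' := fun x θ => F' θ x) (x₀ := t) (a := 0) (b := b)
    (bound := fun _ => M) (μ := volume) (Metric.ball_mem_nhds t hεpos)
    ?_ ?_ ?_ ?_ ?_ ?_
  · exact key.2
  · -- measurability of F x for x near t
    filter_upwards [Metric.ball_mem_nhds t hεpos] with x hx
    have hcont := hF_cont x (hball hx)
    rw [hΙ]
    exact (hcont.mono Ioc_subset_Icc_self).aestronglyMeasurable measurableSet_Ioc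
  · -- integrability of F · t
    have : ContinuousOn (fun θ => F θ t) (uIcc 0 b) := by
      rw [huIcc]; exact hF_cont t ⟨ht0, htT⟩
    exact this.intervalIntegrable
  · -- measurability of F' · t
    have hcont : ContinuousOn (fun θ => F' θ t) (Icc 0 b) := by
      have hmap : MapsTo (fun θ : ℝ => (θ, t)) (Icc 0 b) (Icc 0 b ×ˢ Ioo 0 T) :=
        fun θ hθ => ⟨hθ, ⟨ht0, htT⟩⟩
      exact hF'_cont.comp ((continuous_id.prodMk continuous_const).continuousOn) hmap
    rw [hΙ]
    exact (hcont.mono Ioc_subset_Icc_self).aestronglyMeasurable measurableSet_Ioc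
  · -- bound
    refine ae_of_all _ fun θ hθ x hx => ?_
    rw [hΙ] at hθ
    refine hM (θ, x) ⟨Ioc_subset_Icc_self hθ, ?_⟩
    rw [Metric.mem_ball, Real.dist_eq, abs_sub_lt_iff] at hx
    exact ⟨by linarith [hx.2], by linarith [hx.1]⟩
  · exact intervalIntegrable_const
  · -- differentiability
    refine ae_of_all _ fun θ hθ x hx => ?_
    rw [hΙ] at hθ
    exact h_diff θ (Ioc_subset_Icc_self hθ) x (hball hx)

set_option maxHeartbeats 1000000

/-- (Lemma 5.1.) For a solution of the polar flow equation with fixed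
endpoints, the length `L(t) = ∫₀^π √(ρ² + ρ_θ²) dθ` and the enclosed area
`S(t) = ½∫₀^π ρ² dθ` are differentiable with
`L'(t) = -∫₀^π (κ - A)² √(ρ² + ρ_θ²) dθ + A·S'(t)`, where
`κ = (ρ² + 2ρ_θ² - ρρ_θθ)/(ρ² + ρ_θ²)^{3/2}` is the curvature. -/
theorem lyapunov_identity_polar (A a T : ℝ) (hA : 0 < A) (ha : 0 < a) (hT : 0 < T)
    (ρ ρθ ρθθ ρt ρθt : ℝ → ℝ → ℝ)
    (hpos : ∀ θ ∈ Icc 0 Real.pi, ∀ t ∈ Ioo (0 : ℝ) T, 0 < ρ θ t)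
    (hρ_cont : ContinuousOn (fun p : ℝ × ℝ => ρ p.1 p.2) (Icc 0 Real.pi ×ˢ Ioo 0 T))
    (hρθ : ∀ θ ∈ Icc 0 Real.pi, ∀ t ∈ Ioo (0 : ℝ) T,
      HasDerivWithinAt (fun φ => ρ φ t) (ρθ θ t) (Icc 0 Real.pi) θ)
    (hρθθ : ∀ θ ∈ Icc 0 Real.pi, ∀ t ∈ Ioo (0 : ℝ) T,
      HasDerivWithinAt (fun φ => ρθ φ t) (ρθθ θ t) (Icc 0 Real.pi) θ)
    (hρt : ∀ θ ∈ Icc 0 Real.pi, ∀ t ∈ Ioo (0 : ℝ) T,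
      HasDerivAt (fun τ => ρ θ τ) (ρt θ t) t)
    (hρθt : ∀ θ ∈ Icc 0 Real.pi, ∀ t ∈ Ioo (0 : ℝ) T,
      HasDerivAt (fun τ => ρθ θ τ) (ρθt θ t) t)
    (hρθ_cont : ContinuousOn (fun p : ℝ × ℝ => ρθ p.1 p.2) (Icc 0 Real.pi ×ˢ Ioo 0 T))
    (hρθθ_cont : ContinuousOn (fun p : ℝ × ℝ => ρθθ p.1 p.2) (Icc 0 Real.pi ×ˢ Ioo 0 T))
    (hρt_cont : ContinuousOn (fun p : ℝ × ℝ => ρt p.1 p.2) (Icc 0 Real.pi ×ˢ Ioo 0 T))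
    (hρθt_cont : ContinuousOn (fun p : ℝ × ℝ => ρθt p.1 p.2) (Icc 0 Real.pi ×ˢ Ioo 0 T))
    (hbc : ∀ t ∈ Ioo (0 : ℝ) T, ρ 0 t = a ∧ ρ Real.pi t = a)
    (hpde : ∀ θ ∈ Ioo 0 Real.pi, ∀ t ∈ Ioo (0 : ℝ) T,
      ρt θ t = ρθθ θ t / ((ρ θ t) ^ 2 + (ρθ θ t) ^ 2)
        - (2 * (ρθ θ t) ^ 2 + (ρ θ t) ^ 2) / (ρ θ t * ((ρθ θ t) ^ 2 + (ρ θ t) ^ 2))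
        + (A / ρ θ t) * Real.sqrt ((ρθ θ t) ^ 2 + (ρ θ t) ^ 2)) :
    ∃ L' S' : ℝ → ℝ, ∀ t ∈ Ioo (0 : ℝ) T,
      HasDerivAt (fun τ => ∫ θ in (0 : ℝ)..Real.pi,
        Real.sqrt ((ρ θ τ) ^ 2 + (ρθ θ τ) ^ 2)) (L' t) t ∧
      HasDerivAt (fun τ => (1 / 2) * ∫ θ in (0 : ℝ)..Real.pi, (ρ θ τ) ^ 2) (S' t) t ∧
      L' t = -(∫ θ in (0 : ℝ)..Real.pi,
          (((ρ θ t) ^ 2 + 2 * (ρθ θ t) ^ 2 - ρ θ t * ρθθ θ t)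
              / ((ρ θ t) ^ 2 + (ρθ θ t) ^ 2) ^ ((3 : ℝ) / 2) - A) ^ 2
            * Real.sqrt ((ρ θ t) ^ 2 + (ρθ θ t) ^ 2))
        + A * S' t := by
  have hπpos := Real.pi_pos
  have hπ : (0:ℝ) ≤ Real.pi := hπpos.le
  have slice : ∀ {g : ℝ → ℝ → ℝ}, ContinuousOn (fun p : ℝ × ℝ => g p.1 p.2)
      (Icc 0 Real.pi ×ˢ Ioo 0 T) → ∀ x ∈ Ioo (0:ℝ) T,
      ContinuousOn (fun θ => g θ x) (Icc 0 Real.pi) := by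
    intro g hg x hx
    exact hg.comp ((continuous_id.prodMk continuous_const).continuousOn)
      (fun θ hθ => ⟨hθ, hx⟩)
  have hsq : ∀ θ ∈ Icc 0 Real.pi, ∀ x ∈ Ioo (0:ℝ) T, 0 < (ρ θ x)^2 + (ρθ θ x)^2 :=
    fun θ hθ x hx => add_pos_of_pos_of_nonneg (pow_pos (hpos θ hθ x hx) 2) (sq_nonneg _)
  have hsrt : ∀ θ ∈ Icc 0 Real.pi, ∀ x ∈ Ioo (0:ℝ) T,
      0 < Real.sqrt ((ρ θ x)^2 + (ρθ θ x)^2) :=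
    fun θ hθ x hx => Real.sqrt_pos.mpr (hsq θ hθ x hx)
  have hmix : ∀ θ ∈ Icc 0 Real.pi, ∀ x ∈ Ioo (0:ℝ) T,
      HasDerivWithinAt (fun φ => ρt φ x) (ρθt θ x) (Icc 0 Real.pi) θ :=
    fun θ hθ x hx =>
      mixed_deriv_swap (convex_Icc _ _) isOpen_Ioo hρθ hρt hρθt hρθt_cont hθ hx
  -- derivative of the area integral
  have hS : ∀ t ∈ Ioo (0:ℝ) T,
      HasDerivAt (fun x => ∫ θ in (0:ℝ)..Real.pi, (ρ θ x)^2)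
        (∫ θ in (0:ℝ)..Real.pi, 2 * ρ θ t * ρt θ t) t := by
    intro t ht
    refine param_deriv (F := fun θ x => (ρ θ x)^2) (F' := fun θ x => 2 * ρ θ x * ρt θ x)
      hπ ht (fun x hx => (slice hρ_cont x hx).pow 2) ?_ ?_
    · exact (continuousOn_const.mul hρ_cont).mul hρt_cont
    · intro θ hθ x hx
      have h := (hρt θ hθ x hx).fun_pow 2
      refine h.congr_deriv ?_
      push_cast
      ring
  -- derivative of the length integral
  have hL : ∀ t ∈ Ioo (0:ℝ) T,
      HasDerivAt (fun x => ∫ θ in (0:ℝ)..Real.pi, Real.sqrt ((ρ θ x)^2 + (ρθ θ x)^2))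
        (∫ θ in (0:ℝ)..Real.pi,
          (ρ θ t * ρt θ t + ρθ θ t * ρθt θ t) / Real.sqrt ((ρ θ t)^2 + (ρθ θ t)^2)) t := by
    intro t ht
    refine param_deriv (F := fun θ x => Real.sqrt ((ρ θ x)^2 + (ρθ θ x)^2))
      (F' := fun θ x => (ρ θ x * ρt θ x + ρθ θ x * ρθt θ x)
        / Real.sqrt ((ρ θ x)^2 + (ρθ θ x)^2)) hπ ht ?_ ?_ ?_
    · intro x hx
      exact (((slice hρ_cont x hx).pow 2).add ((slice hρθ_cont x hx).pow 2)).sqrt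
    · refine ContinuousOn.div ?_ ?_ ?_
      · exact (hρ_cont.mul hρt_cont).add (hρθ_cont.mul hρθt_cont)
      · exact ((hρ_cont.pow 2).add (hρθ_cont.pow 2)).sqrt
      · intro p hp
        exact (hsrt p.1 hp.1 p.2 hp.2).ne'
    · intro θ hθ x hx
      have h1 := ((hρt θ hθ x hx).fun_pow 2).fun_add ((hρθt θ hθ x hx).fun_pow 2)
      have h2 := h1.sqrt (hsq θ hθ x hx).ne'
      convert h2 using 1
      have hs := hsrt θ hθ x hx
      field_simp
      ring
  refine ⟨fun t => ∫ θ in (0:ℝ)..Real.pi,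
      (ρ θ t * ρt θ t + ρθ θ t * ρθt θ t) / Real.sqrt ((ρ θ t)^2 + (ρθ θ t)^2),
    fun t => ∫ θ in (0:ℝ)..Real.pi, ρ θ t * ρt θ t,
    fun t ht => ⟨hL t ht, ?_, ?_⟩⟩
  · -- area derivative with the 1/2 factor
    have h := HasDerivAt.const_mul (1/2 : ℝ) (hS t ht)
    refine h.congr_deriv ?_
    rw [← intervalIntegral.integral_const_mul]
    refine intervalIntegral.integral_congr fun θ _ => ?_
    ring
  · -- the Lyapunov identity
    have h0mem : (0:ℝ) ∈ Icc (0:ℝ) Real.pi := ⟨le_rfl, hπ⟩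
    have hπmem : Real.pi ∈ Icc (0:ℝ) Real.pi := ⟨hπ, le_rfl⟩
    have hρt0 : ρt 0 t = 0 := by
      have heq : (fun τ => ρ 0 τ) =ᶠ[𝓝 t] fun _ => a := by
        filter_upwards [isOpen_Ioo.mem_nhds ht] with τ hτ
        exact (hbc τ hτ).1
      exact (hρt 0 h0mem t ht).unique ((hasDerivAt_const t a).congr_of_eventuallyEq heq)
    have hρtπ : ρt Real.pi t = 0 := by
      have heq : (fun τ => ρ Real.pi τ) =ᶠ[𝓝 t] fun _ => a := by
        filter_upwards [isOpen_Ioo.mem_nhds ht] with τ hτ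
        exact (hbc τ hτ).2
      exact (hρt Real.pi hπmem t ht).unique
        ((hasDerivAt_const t a).congr_of_eventuallyEq heq)
    set w : ℝ → ℝ := fun θ => ρt θ t * ρθ θ t / Real.sqrt ((ρ θ t)^2 + (ρθ θ t)^2)
      with hwdef
    set W : ℝ → ℝ := fun θ =>
      ((ρθt θ t * ρθ θ t + ρt θ t * ρθθ θ t) * Real.sqrt ((ρ θ t)^2 + (ρθ θ t)^2)
        - ρt θ t * ρθ θ t * ((2 * ρ θ t * ρθ θ t + 2 * ρθ θ t * ρθθ θ t)
            / (2 * Real.sqrt ((ρ θ t)^2 + (ρθ θ t)^2))))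
        / Real.sqrt ((ρ θ t)^2 + (ρθ θ t)^2) ^ 2 with hWdef
    have hWderiv : ∀ θ ∈ Icc 0 Real.pi, HasDerivWithinAt w (W θ) (Icc 0 Real.pi) θ := by
      intro θ hθ
      have hnum : HasDerivWithinAt (fun φ => ρt φ t * ρθ φ t)
          (ρθt θ t * ρθ θ t + ρt θ t * ρθθ θ t) (Icc 0 Real.pi) θ :=
        (hmix θ hθ t ht).mul (hρθθ θ hθ t ht)
      have hqd : HasDerivWithinAt (fun φ => (ρ φ t)^2 + (ρθ φ t)^2)
          (2 * ρ θ t * ρθ θ t + 2 * ρθ θ t * ρθθ θ t) (Icc 0 Real.pi) θ := by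
        have h := ((hρθ θ hθ t ht).fun_pow 2).fun_add ((hρθθ θ hθ t ht).fun_pow 2)
        refine h.congr_deriv ?_
        push_cast
        ring
      have hg := hqd.sqrt (hsq θ hθ t ht).ne'
      exact hnum.div hg (hsrt θ hθ t ht).ne'
    have hwcont : ContinuousOn w (Icc 0 Real.pi) :=
      fun θ hθ => (hWderiv θ hθ).continuousWithinAt
    have cρ := slice hρ_cont t ht
    have cρ1 := slice hρθ_cont t ht
    have cρ2 := slice hρθθ_cont t ht
    have cp := slice hρt_cont t ht
    have cp1 := slice hρθt_cont t ht
    have csqrt : ContinuousOn (fun θ => Real.sqrt ((ρ θ t)^2 + (ρθ θ t)^2))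
        (Icc 0 Real.pi) := ((cρ.pow 2).add (cρ1.pow 2)).sqrt
    have hWcont : ContinuousOn W (Icc 0 Real.pi) := by
      rw [hWdef]
      refine ContinuousOn.div ?_ (csqrt.pow 2) ?_
      · refine ContinuousOn.sub (((cp1.mul cρ1).add (cp.mul cρ2)).mul csqrt) ?_
        refine (cp.mul cρ1).mul (ContinuousOn.div ?_ (continuousOn_const.mul csqrt) ?_)
        · exact ((continuousOn_const.mul cρ).mul cρ1).add
            ((continuousOn_const.mul cρ1).mul cρ2)
        · intro θ hθ
          exact (mul_pos two_pos (hsrt θ hθ t ht)).ne'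
      · intro θ hθ
        exact (pow_pos (hsrt θ hθ t ht) 2).ne'
    have hWint : IntervalIntegrable W MeasureTheory.volume 0 Real.pi := by
      have h : ContinuousOn W (uIcc 0 Real.pi) := by rwa [uIcc_of_le hπ]
      exact h.intervalIntegrable
    have hftc0 : ∫ θ in (0:ℝ)..Real.pi, W θ = 0 := by
      have hftc : ∫ θ in (0:ℝ)..Real.pi, W θ = w Real.pi - w 0 := by
        refine intervalIntegral.integral_eq_sub_of_hasDeriv_right_of_le hπ hwcont ?_ hWint
        intro θ hθ
        exact ((hWderiv θ (Ioo_subset_Icc_self hθ)).hasDerivAt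
          (Icc_mem_nhds hθ.1 hθ.2)).hasDerivWithinAt
      rw [hftc]
      simp [hwdef, hρt0, hρtπ]
    -- pointwise identity on the open interval
    have hpt : ∀ θ ∈ Ioo (0:ℝ) Real.pi,
        (ρ θ t * ρt θ t + ρθ θ t * ρθt θ t) / Real.sqrt ((ρ θ t)^2 + (ρθ θ t)^2)
        = (-((((ρ θ t)^2 + 2*(ρθ θ t)^2 - ρ θ t * ρθθ θ t)
              / ((ρ θ t)^2 + (ρθ θ t)^2) ^ ((3:ℝ)/2) - A)^2
            * Real.sqrt ((ρ θ t)^2 + (ρθ θ t)^2))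
          + A * (ρ θ t * ρt θ t)) + W θ := by
      intro θ hθ
      have hθI := Ioo_subset_Icc_self hθ
      have hpde' := hpde θ hθ t ht
      have hr := hpos θ hθI t ht
      have hq0 := hsq θ hθI t ht
      simp only [hWdef]
      set r := ρ θ t with hrdef
      set r1 := ρθ θ t with hr1def
      set r2 := ρθθ θ t with hr2def
      set p := ρt θ t with hpdef
      set p1 := ρθt θ t with hp1def
      set s := Real.sqrt (r^2 + r1^2) with hsdef
      have hs : 0 < s := Real.sqrt_pos.mpr hq0
      have hs2 : s^2 = r^2 + r1^2 := Real.sq_sqrt hq0.le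
      have hcomm : Real.sqrt (r1^2 + r^2) = s := by
        rw [hsdef, add_comm (r1^2) (r^2)]
      have hrpow : (r^2 + r1^2) ^ ((3:ℝ)/2) = s^3 := by
        have h1 : (r^2 + r1^2) ^ ((3:ℝ)/2) = ((r^2 + r1^2) ^ ((1:ℝ)/2)) ^ (3:ℕ) := by
          rw [← Real.rpow_natCast ((r^2 + r1^2) ^ ((1:ℝ)/2)) 3, ← Real.rpow_mul hq0.le]
          norm_num
        rw [h1, hsdef, Real.sqrt_eq_rpow]
      have hp' : p = r2 / (r^2 + r1^2) - (2*r1^2 + r^2) / (r * (r1^2 + r^2)) + A / r * s := by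
        rw [hcomm] at hpde'
        exact hpde'
      have hpr : r * p = (A - (r^2 + 2*r1^2 - r*r2)/s^3) * s := by
        rw [hp', show r1^2 + r^2 = s^2 by rw [hs2]; ring, show r^2 + r1^2 = s^2 from hs2.symm]
        field_simp
        ring
      have hp2 : p = (A - (r^2 + 2*r1^2 - r*r2)/s^3) * s / r := by
        rw [eq_div_iff hr.ne']
        linear_combination hpr
      have hbr : r * s^2 - r2 * s^2 + r*r1^2 + r1^2*r2 = r * (r^2 + 2*r1^2 - r*r2) := by
        rw [hs2]; ring
      have hWval : ((p1 * r1 + p * r2) * s - p * r1 * ((2*r*r1 + 2*r1*r2)/(2*s))) / s^2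
          = (r*p + r1*p1)/s - p * (r * s^2 - r2 * s^2 + r*r1^2 + r1^2*r2) / s^3 := by
        field_simp
        ring
      rw [hrpow, hWval, hbr, hp2]
      field_simp
      ring
    -- continuity/integrability of the pieces
    have hKcont : ContinuousOn (fun θ =>
        (((ρ θ t)^2 + 2*(ρθ θ t)^2 - ρ θ t * ρθθ θ t)
            / ((ρ θ t)^2 + (ρθ θ t)^2) ^ ((3:ℝ)/2) - A)^2
          * Real.sqrt ((ρ θ t)^2 + (ρθ θ t)^2)) (Icc 0 Real.pi) := by
      refine ContinuousOn.mul (ContinuousOn.pow ?_ 2) csqrt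
      refine ContinuousOn.sub (ContinuousOn.div ?_ ?_ ?_) continuousOn_const
      · exact ((cρ.pow 2).add (continuousOn_const.mul (cρ1.pow 2))).sub (cρ.mul cρ2)
      · exact ((cρ.pow 2).add (cρ1.pow 2)).rpow_const
          (fun θ hθ => Or.inl (hsq θ hθ t ht).ne')
      · intro θ hθ
        exact (Real.rpow_pos_of_pos (hsq θ hθ t ht) _).ne'
    have hKint : IntervalIntegrable (fun θ =>
        (((ρ θ t)^2 + 2*(ρθ θ t)^2 - ρ θ t * ρθθ θ t)
            / ((ρ θ t)^2 + (ρθ θ t)^2) ^ ((3:ℝ)/2) - A)^2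
          * Real.sqrt ((ρ θ t)^2 + (ρθ θ t)^2)) MeasureTheory.volume 0 Real.pi := by
      have h : ContinuousOn (fun θ =>
          (((ρ θ t)^2 + 2*(ρθ θ t)^2 - ρ θ t * ρθθ θ t)
              / ((ρ θ t)^2 + (ρθ θ t)^2) ^ ((3:ℝ)/2) - A)^2
            * Real.sqrt ((ρ θ t)^2 + (ρθ θ t)^2)) (uIcc 0 Real.pi) := by
        rw [uIcc_of_le hπ]; exact hKcont
      exact h.intervalIntegrable
    have hSint : IntervalIntegrable (fun θ => ρ θ t * ρt θ t)
        MeasureTheory.volume 0 Real.pi := by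
      have h : ContinuousOn (fun θ => ρ θ t * ρt θ t) (uIcc 0 Real.pi) := by
        rw [uIcc_of_le hπ]; exact cρ.mul cp
      exact h.intervalIntegrable
    have hGint : IntervalIntegrable (fun θ =>
        -((((ρ θ t)^2 + 2*(ρθ θ t)^2 - ρ θ t * ρθθ θ t)
            / ((ρ θ t)^2 + (ρθ θ t)^2) ^ ((3:ℝ)/2) - A)^2
          * Real.sqrt ((ρ θ t)^2 + (ρθ θ t)^2))
        + A * (ρ θ t * ρt θ t)) MeasureTheory.volume 0 Real.pi :=
      hKint.neg.add (hSint.const_mul A)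
    -- put it together
    have hae : ∀ᵐ θ ∂(MeasureTheory.volume : MeasureTheory.Measure ℝ), θ ≠ Real.pi := by
      rw [MeasureTheory.ae_iff]
      have h : {θ : ℝ | ¬ θ ≠ Real.pi} = {Real.pi} := by ext x; simp
      rw [h]
      exact MeasureTheory.measure_singleton _
    have hcongr : (∫ θ in (0:ℝ)..Real.pi,
        (ρ θ t * ρt θ t + ρθ θ t * ρθt θ t) / Real.sqrt ((ρ θ t)^2 + (ρθ θ t)^2))
        = ∫ θ in (0:ℝ)..Real.pi,
          ((-((((ρ θ t)^2 + 2*(ρθ θ t)^2 - ρ θ t * ρθθ θ t)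
              / ((ρ θ t)^2 + (ρθ θ t)^2) ^ ((3:ℝ)/2) - A)^2
            * Real.sqrt ((ρ θ t)^2 + (ρθ θ t)^2))
          + A * (ρ θ t * ρt θ t)) + W θ) := by
      refine intervalIntegral.integral_congr_ae ?_
      filter_upwards [hae] with θ hθne hθmem
      rw [uIoc_of_le hπ] at hθmem
      exact hpt θ ⟨hθmem.1, lt_of_le_of_ne hθmem.2 hθne⟩
    have hKnegint : IntervalIntegrable (fun θ =>
        -((((ρ θ t)^2 + 2*(ρθ θ t)^2 - ρ θ t * ρθθ θ t)
            / ((ρ θ t)^2 + (ρθ θ t)^2) ^ ((3:ℝ)/2) - A)^2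
          * Real.sqrt ((ρ θ t)^2 + (ρθ θ t)^2))) MeasureTheory.volume 0 Real.pi :=
      hKint.neg
    have hAmulint : IntervalIntegrable (fun θ => A * (ρ θ t * ρt θ t))
        MeasureTheory.volume 0 Real.pi := hSint.const_mul A
    beta_reduce
    rw [hcongr, intervalIntegral.integral_add hGint hWint, hftc0, add_zero,
      intervalIntegral.integral_add hKnegint hAmulint,
      intervalIntegral.integral_neg, intervalIntegral.integral_const_mul]
end
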